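/- arXiv:2001.08254 — 8 statements merged into one kernel-verified Lean document; each statement's English description precedes it below -/
import Mathlib

section
/- Let M and N be real Hilbert spaces, a: M×M→ℝ a bounded symmetric bilinear form with a(u,φ) ≤ C_a‖u‖_M‖φ‖_M and coercive: a(u,u) ≥ γ_a‖u‖_M² for all u ∈ M. Let b: M×N→ℝ satisfy b(u,p) ≤ C_b‖u‖_M·|p|_e and the inf-sup condition sup_{u∈M} b(u,q)/‖u‖_M ≥ γ_b|q|_e for all q ∈ N, where |·|_e is a seminorm on N vanishing only on the kernel K = {p ∈ N : b(φ,p)=0 ∀φ∈M}. Let c: N×N→ℝ be symmetric positive semi-definite with c(q,q) > 0 for all q ∈ K\{0}. Define L(u,p;φ,q) = a(u,φ) + b(φ,p) + b(u,q) − c(p,q) and ‖q‖_N² = |q̄|_e² + c(q,q), where q̄ is the component of q orthogonal to K. Then L satisfies the Babuška inf-sup condition: there is a constant β > 0 depending only on C_a, C_b, γ_a, γ_b such that for all (u,p) ∈ M×N, sup_{(φ,q)∈M×N} L(u,p;φ,q)/(‖φ‖_M² + ‖q‖_N²)^{1/2} ≥ β(‖u‖_M² + ‖p‖_N²)^{1/2}.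 -/
open scoped RealInnerProductSpace


private lemma quad_aux (A B C R s : ℝ) (hA : 0 < A) (hB : 0 < B) (hC : 0 < C)
    (hR : 0 ≤ R) (hs : 0 ≤ s) (h : A * R ^ 2 ≤ B * (s * R) + C * s ^ 2) :
    A * R ≤ (A + B + C) * s := by
  rcases eq_or_lt_of_le hs with h0 | hspos
  · subst h0
    have h2 : R ^ 2 ≤ 0 := by nlinarith
    have hR0 : R = 0 := by
      have := le_antisymm h2 (sq_nonneg R)
      exact pow_eq_zero_iff two_ne_zero |>.mp this
    rw [hR0]; ring_nf; simp
  · by_contra hcon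
    push_neg at hcon
    have hRpos : 0 < R := by nlinarith [mul_pos (by positivity : (0:ℝ) < A + B + C) hspos]
    have p1 := mul_lt_mul_of_pos_right hcon hRpos
    have p2 := mul_lt_mul_of_pos_left hcon hspos
    nlinarith [p1, p2, mul_pos hA (mul_pos hspos hspos),
      mul_nonneg hB.le (mul_nonneg hs hR), mul_nonneg hC.le (mul_nonneg hs hs)]


/-- Babuška inf-sup condition for the combined saddle-point form
`L(u,p;φ,q) = a(u,φ) + b(φ,p) + b(u,q) − c(p,q)` when `a` is coercive on all of `M`.
The supremum condition `sup L/‖(φ,q)‖ ≥ β‖(u,p)‖` is expressed in the equivalent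
"least upper bound" form. `proj q` is the component of `q` orthogonal to the kernel
`K = {p | b(φ,p) = 0 ∀φ}`, and `‖q‖_N² = |proj q|_e² + c(q,q)`. -/
theorem stmt0
    {M N : Type*}
    [NormedAddCommGroup M] [InnerProductSpace ℝ M] [CompleteSpace M]
    [NormedAddCommGroup N] [InnerProductSpace ℝ N] [CompleteSpace N]
    (a : M →ₗ[ℝ] M →ₗ[ℝ] ℝ) (b : M →ₗ[ℝ] N →ₗ[ℝ] ℝ) (c : N →ₗ[ℝ] N →ₗ[ℝ] ℝ)
    (e : N → ℝ)
    (Ca Cb γa γb : ℝ)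
    (hCa : 0 < Ca) (hCb : 0 < Cb) (hγa : 0 < γa) (hγb : 0 < γb)
    -- |·|_e is a seminorm on N ...
    (he_nonneg : ∀ q, 0 ≤ e q)
    (he_smul : ∀ (t : ℝ) (q : N), e (t • q) = |t| * e q)
    (he_add : ∀ p q : N, e (p + q) ≤ e p + e q)
    -- ... vanishing only on the kernel K
    (he_kernel : ∀ q : N, e q = 0 → ∀ φ : M, b φ q = 0)
    -- a is symmetric, bounded and coercive on M
    (ha_symm : ∀ u φ, a u φ = a φ u)
    (ha_bound : ∀ u φ, a u φ ≤ Ca * ‖u‖ * ‖φ‖)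
    (ha_coercive : ∀ u, γa * ‖u‖ ^ 2 ≤ a u u)
    -- b is bounded and satisfies the inf-sup condition with respect to |·|_e
    (hb_bound : ∀ u p, b u p ≤ Cb * ‖u‖ * e p)
    (hb_infsup : ∀ q : N, ∀ s : ℝ, (∀ u : M, b u q ≤ s * ‖u‖) → γb * e q ≤ s)
    -- c is symmetric positive semi-definite, positive on K \ {0}
    (hc_symm : ∀ p q, c p q = c q p)
    (hc_psd : ∀ q, 0 ≤ c q q)
    (hc_pos_on_K : ∀ q : N, (∀ φ : M, b φ q = 0) → q ≠ 0 → 0 < c q q)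
    -- proj q is the component of q orthogonal to K
    (proj : N → N)
    (hproj_ker : ∀ (q : N) (φ : M), b φ (q - proj q) = 0)
    (hproj_orth : ∀ q k : N, (∀ φ : M, b φ k = 0) → ⟪proj q, k⟫ = 0) :
    ∃ β > 0, ∀ (u : M) (p : N) (s : ℝ),
      (∀ (φ : M) (q : N), a u φ + b φ p + b u q - c p q ≤
          s * Real.sqrt (‖φ‖ ^ 2 + (e (proj q) ^ 2 + c q q))) →
      β * Real.sqrt (‖u‖ ^ 2 + (e (proj p) ^ 2 + c p p)) ≤ s := by
  obtain ⟨A, hAdef⟩ : ∃ A : ℝ, A = γa * γb ^ 2 := ⟨_, rfl⟩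
  obtain ⟨B, hBdef⟩ : ∃ B : ℝ, B = γb ^ 2 + γa * γb ^ 2 + 2 * Ca ^ 2 := ⟨_, rfl⟩
  obtain ⟨C, hCdef⟩ : ∃ C : ℝ, C = 2 * γa := ⟨_, rfl⟩
  have hApos : 0 < A := by rw [hAdef]; positivity
  have hBpos : 0 < B := by rw [hBdef]; positivity
  have hCpos : 0 < C := by rw [hCdef]; positivity
  have hDpos : 0 < A + B + C := by positivity
  refine ⟨A / (A + B + C), by positivity, ?_⟩
  intro u p s hs
  -- b does not distinguish q and proj q
  have hbproj : ∀ (q : N) (φ : M), b φ (proj q) = b φ q := by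
    intro q φ
    have h := hproj_ker q φ
    rw [map_sub] at h
    linarith
  -- proj 0 = 0
  have hproj0 : proj (0 : N) = 0 := by
    have hk : ∀ φ : M, b φ (proj 0) = 0 := by
      intro φ; have := hbproj 0 φ; simpa using this
    have := hproj_orth 0 (proj 0) hk
    exact inner_self_eq_zero.mp this
  have he0 : e (0 : N) = 0 := by
    have := he_smul 0 0; simpa using this
  -- proj (-p) = - proj p
  have hprojneg : proj (-p) = -proj p := by
    have hk : ∀ φ : M, b φ (proj (-p) + proj p) = 0 := by
      intro φ
      have h1 := hbproj (-p) φ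
      have h2 := hbproj p φ
      rw [map_neg] at h1
      rw [map_add]
      linarith
    have o1 := hproj_orth (-p) _ hk
    have o2 := hproj_orth p _ hk
    have hz : ⟪proj (-p) + proj p, proj (-p) + proj p⟫ = 0 := by
      rw [inner_add_left, o1, o2]; ring
    exact eq_neg_of_add_eq_zero_left (inner_self_eq_zero.mp hz)
  obtain ⟨R, hRdef⟩ : ∃ R : ℝ, R = Real.sqrt (‖u‖ ^ 2 + (e (proj p) ^ 2 + c p p)) := ⟨_, rfl⟩
  rw [← hRdef]
  have hXnn : (0:ℝ) ≤ ‖u‖ := norm_nonneg u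
  have hPnn : 0 ≤ e (proj p) := he_nonneg _
  have hcpp : 0 ≤ c p p := hc_psd p
  have hRnn : 0 ≤ R := hRdef ▸ Real.sqrt_nonneg _
  have hR2 : R ^ 2 = ‖u‖ ^ 2 + (e (proj p) ^ 2 + c p p) := by
    rw [hRdef]; exact Real.sq_sqrt (by positivity)
  -- test (φ, q) = (u, -p), inequality (I)
  have hI : γa * ‖u‖ ^ 2 + c p p ≤ s * R := by
    have h := hs u (-p)
    rw [hprojneg] at h
    have heneg : e (-proj p) = e (proj p) := by
      have := he_smul (-1) (proj p)
      simpa using this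
    simp only [map_neg, LinearMap.neg_apply, neg_neg, heneg] at h
    rw [← hRdef] at h
    linarith [ha_coercive u]
  -- tests with q = 0
  have hkey0 : ∀ φ : M, a u φ + b φ p ≤ s * ‖φ‖ := by
    intro φ
    have h := hs φ 0
    rw [hproj0, he0] at h
    simp only [map_zero] at h
    have hsq : Real.sqrt (‖φ‖ ^ 2 + ((0:ℝ) ^ 2 + 0)) = ‖φ‖ := by
      rw [show ‖φ‖ ^ 2 + ((0:ℝ) ^ 2 + 0) = ‖φ‖ ^ 2 by ring]
      exact Real.sqrt_sq (norm_nonneg φ)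
    rw [hsq] at h
    linarith
  -- inequality (II) via the inf-sup condition
  have hII : γb * e (proj p) ≤ s + Ca * ‖u‖ := by
    apply hb_infsup
    intro φ
    rw [hbproj]
    have h1 := hkey0 φ
    have h2 : -(a u φ) ≤ Ca * ‖u‖ * ‖φ‖ := by
      have := ha_bound u (-φ)
      rw [map_neg, norm_neg] at this
      linarith
    nlinarith [h1, h2]
  -- s is nonnegative
  have hs0 : 0 ≤ s := by
    rcases eq_or_lt_of_le hRnn with h0 | hRpos
    · have hR2' := hR2
      rw [← h0] at hR2'
      have hX2 : ‖u‖ ^ 2 ≤ 0 := by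
        have := sq_nonneg (e (proj p)); linarith
      have hX0 : ‖u‖ = 0 :=
        pow_eq_zero_iff two_ne_zero |>.mp (le_antisymm hX2 (sq_nonneg ‖u‖))
      rw [hX0] at hII
      have := mul_nonneg hγb.le hPnn
      linarith
    · by_contra hneg
      push_neg at hneg
      have hsr : s * R < 0 := mul_neg_of_neg_of_pos hneg hRpos
      linarith [mul_nonneg hγa.le (sq_nonneg ‖u‖)]
  -- elementary consequences
  have e1 : γa * ‖u‖ ^ 2 ≤ s * R := by linarith
  have e2 : c p p ≤ s * R := by linarith [mul_nonneg hγa.le (sq_nonneg ‖u‖)]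
  have e3 : γb ^ 2 * e (proj p) ^ 2 ≤ 2 * s ^ 2 + 2 * Ca ^ 2 * ‖u‖ ^ 2 := by
    nlinarith [mul_self_le_mul_self (mul_nonneg hγb.le hPnn) hII, sq_nonneg (s - Ca * ‖u‖)]
  -- the combined quadratic inequality
  have hq : A * R ^ 2 ≤ B * (s * R) + C * s ^ 2 := by
    have m1 := mul_le_mul_of_nonneg_left e1 (by positivity : (0:ℝ) ≤ γb ^ 2)
    have m2 := mul_le_mul_of_nonneg_left e2 (by positivity : (0:ℝ) ≤ γa * γb ^ 2)
    have m3 := mul_le_mul_of_nonneg_left e3 hγa.le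
    have m4 := mul_le_mul_of_nonneg_left e1 (by positivity : (0:ℝ) ≤ 2 * Ca ^ 2)
    rw [hAdef, hBdef, hCdef, hR2]
    linarith [m1, m2, m3, m4]
  have hfin := quad_aux A B C R s hApos hBpos hCpos hRnn hs0 hq
  rw [div_mul_eq_mul_div, div_le_iff₀ hDpos]
  linarith [hfin]
end

section
/- Under the hypotheses of the previous setting (a symmetric, bounded, coercive on M with constants C_a, γ_a; b bounded by C_b and satisfying the inf-sup condition with constant γ_b with respect to the seminorm |·|_e; c symmetric positive semi-definite), for any (u,p) ∈ M×N, the test pair φ = u + θw with θ = γ_a γ_b/C_a², where w ∈ M satisfies b(w,p̄) ≥ γ_b|p̄|_e² and ‖w‖_M = |p̄|_e, and q = −p, yields L(u,p;φ,q) ≥ (γ_a/2)‖u‖_M² + (γ_a γ_b²/(2C_a²))|p̄|_e² + c(p,p). -/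
open scoped RealInnerProductSpace

/-- The key lower bound in the proof of the Babuška inf-sup condition: with the test
functions `φ = u + θ w`, `θ = γ_a γ_b / C_a²`, and `q = -p`, where `w` realizes the
inf-sup condition for `b` at `p̄` (the component of `p` orthogonal to the kernel `K`),
one has `L(u,p;φ,q) ≥ (γ_a/2)‖u‖² + (γ_a γ_b²/(2C_a²))|p̄|_e² + c(p,p)`. -/
theorem stmt1
    {M N : Type*}
    [NormedAddCommGroup M] [InnerProductSpace ℝ M] [CompleteSpace M]
    [NormedAddCommGroup N] [InnerProductSpace ℝ N] [CompleteSpace N]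
    (a : M →ₗ[ℝ] M →ₗ[ℝ] ℝ) (b : M →ₗ[ℝ] N →ₗ[ℝ] ℝ) (c : N →ₗ[ℝ] N →ₗ[ℝ] ℝ)
    (e : N → ℝ)
    (Ca Cb γa γb : ℝ)
    (hCa : 0 < Ca) (hCb : 0 < Cb) (hγa : 0 < γa) (hγb : 0 < γb)
    (he_nonneg : ∀ q, 0 ≤ e q)
    -- a is symmetric, bounded and coercive on M
    (ha_symm : ∀ u φ, a u φ = a φ u)
    (ha_bound : ∀ u φ, a u φ ≤ Ca * ‖u‖ * ‖φ‖)
    (ha_coercive : ∀ u, γa * ‖u‖ ^ 2 ≤ a u u)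
    -- b is bounded by C_b with respect to |·|_e
    (hb_bound : ∀ u p, b u p ≤ Cb * ‖u‖ * e p)
    -- c is symmetric positive semi-definite
    (hc_symm : ∀ p q, c p q = c q p)
    (hc_psd : ∀ q, 0 ≤ c q q)
    -- data: (u,p), the projection p̄ of p onto K^⊥, and w from the inf-sup condition
    (u : M) (p pbar : N)
    (hpbar : ∀ φ : M, b φ (p - pbar) = 0)
    (w : M)
    (hw_infsup : γb * e pbar ^ 2 ≤ b w pbar)
    (hw_norm : ‖w‖ = e pbar) :
    γa / 2 * ‖u‖ ^ 2 + γa * γb ^ 2 / (2 * Ca ^ 2) * e pbar ^ 2 + c p p ≤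
      a u (u + (γa * γb / Ca ^ 2) • w) + b (u + (γa * γb / Ca ^ 2) • w) p
        + b u (-p) - c p (-p) := by
  have h1 := ha_coercive u
  have h2 : -(Ca * ‖u‖ * e pbar) ≤ a u w := by
    have := ha_bound u (-w)
    simp only [map_neg, norm_neg] at this
    rw [hw_norm] at this
    linarith
  have h3 : b w p = b w pbar := by
    have := hpbar w
    simp only [map_sub] at this
    linarith
  have h4 : γb * e pbar ^ 2 ≤ b w p := h3 ▸ hw_infsup
  have hθ : (0:ℝ) ≤ γa * γb / Ca ^ 2 := by positivity
  have H2 : (γa * γb / Ca ^ 2) * -(Ca * ‖u‖ * e pbar) ≤ (γa * γb / Ca ^ 2) * a u w :=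
    mul_le_mul_of_nonneg_left h2 hθ
  have H4 : (γa * γb / Ca ^ 2) * (γb * e pbar ^ 2) ≤ (γa * γb / Ca ^ 2) * b w p :=
    mul_le_mul_of_nonneg_left h4 hθ
  have key : γa / 2 * ‖u‖ ^ 2 - (γa * γb / Ca ^ 2) * (Ca * ‖u‖ * e pbar)
      + ((γa * γb / Ca ^ 2) * (γb * e pbar ^ 2) - γa * γb ^ 2 / (2 * Ca ^ 2) * e pbar ^ 2)
      = γa / (2 * Ca ^ 2) * (Ca * ‖u‖ - γb * e pbar) ^ 2 := by
    field_simp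
    ring
  have key2 : (0:ℝ) ≤ γa / (2 * Ca ^ 2) * (Ca * ‖u‖ - γb * e pbar) ^ 2 := by positivity
  simp only [map_add, map_smul, map_neg, LinearMap.add_apply, LinearMap.smul_apply,
    smul_eq_mul]
  linarith [h1, H2, H4, hc_psd p]
end

section
/- Let X be a Hilbert space, L: X → X' a bounded symmetric linear operator satisfying ⟨Lx,y⟩ ≤ C‖x‖_X‖y‖_X and the inf-sup condition inf_x sup_y ⟨Lx,y⟩/(‖x‖_X‖y‖_X) = β > 0. Let P: X' → X be the Riesz map defined by (Pf, y)_X = ⟨f, y⟩ for all f ∈ X', y ∈ X. Then the operator PL: X → X satisfies ‖PL‖ ≤ C and ‖(PL)^{-1}‖ ≤ 1/β, hence the condition number κ(PL) = ‖PL‖·‖(PL)^{-1}‖ ≤ C/β. -/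
open scoped RealInnerProductSpace

/-- The mapping-property principle: if `L : X → X'` is bounded and symmetric with
`⟨Lx,y⟩ ≤ C‖x‖‖y‖` and satisfies the inf-sup condition with constant `β > 0`, then the
Riesz-preconditioned operator `PL : X → X` (where `P` is the inverse of the Riesz map)
is bijective with `‖PL x‖ ≤ C‖x‖` and `‖PL x‖ ≥ β‖x‖`, hence `κ(PL) ≤ C/β`. -/
theorem stmt2
    {X : Type*} [NormedAddCommGroup X] [InnerProductSpace ℝ X] [CompleteSpace X]
    (L : X →L[ℝ] StrongDual ℝ X) (C β : ℝ) (hC : 0 < C) (hβ : 0 < β)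
    (hsym : ∀ x y : X, L x y = L y x)
    (hbound : ∀ x y : X, L x y ≤ C * ‖x‖ * ‖y‖)
    (hinfsup : ∀ x : X, ∀ s : ℝ, (∀ y : X, L x y ≤ s * ‖y‖) → β * ‖x‖ ≤ s) :
    Function.Bijective (fun x : X => (InnerProductSpace.toDual ℝ X).symm (L x)) ∧
    (∀ x : X, ‖(InnerProductSpace.toDual ℝ X).symm (L x)‖ ≤ C * ‖x‖) ∧
    (∀ x : X, β * ‖x‖ ≤ ‖(InnerProductSpace.toDual ℝ X).symm (L x)‖) := by
  set T : X →L[ℝ] X :=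
    ((InnerProductSpace.toDual ℝ X).symm.toContinuousLinearEquiv :
      StrongDual ℝ X ≃L[ℝ] X).toContinuousLinearMap.comp L with hT
  have hTapp : ∀ x : X, T x = (InnerProductSpace.toDual ℝ X).symm (L x) := fun _ => rfl
  have key : ∀ x y : X, ⟪T x, y⟫ = L x y := fun x y => by
    rw [hTapp]; exact InnerProductSpace.toDual_symm_apply
  have hlow : ∀ x : X, β * ‖x‖ ≤ ‖T x‖ := by
    intro x
    refine hinfsup x ‖T x‖ fun y => ?_
    rw [← key]
    exact real_inner_le_norm _ _
  have hup : ∀ x : X, ‖T x‖ ≤ C * ‖x‖ := by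
    intro x
    rcases eq_or_ne (T x) 0 with h | h
    · rw [h, norm_zero]; positivity
    · have h1 : ‖T x‖ * ‖T x‖ ≤ (C * ‖x‖) * ‖T x‖ := by
        calc ‖T x‖ * ‖T x‖ = ⟪T x, T x⟫ := (real_inner_self_eq_norm_mul_norm _).symm
        _ = L x (T x) := key x (T x)
        _ ≤ C * ‖x‖ * ‖T x‖ := hbound x (T x)
      exact le_of_mul_le_mul_right h1 (norm_pos_iff.mpr h)
  have hker : ∀ x : X, T x = 0 → x = 0 := by
    intro x hx
    have h0 : β * ‖x‖ ≤ 0 := by simpa [hx] using hlow x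
    have : ‖x‖ ≤ 0 := by nlinarith [norm_nonneg x]
    simpa using le_antisymm this (norm_nonneg x)
  have hinj : Function.Injective T := by
    intro a b hab
    have : T (a - b) = 0 := by rw [map_sub, hab, sub_self]
    exact sub_eq_zero.mp (hker _ this)
  have hanti : AntilipschitzWith (Real.toNNReal β)⁻¹ T := by
    refine T.antilipschitz_of_bound fun x => ?_
    have hcoe : (((Real.toNNReal β)⁻¹ : NNReal) : ℝ) = β⁻¹ := by
      rw [NNReal.coe_inv, Real.coe_toNNReal _ hβ.le]
    rw [hcoe, le_inv_mul_iff₀ hβ]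
    exact hlow x
  set K : Submodule ℝ X := LinearMap.range (T : X →ₗ[ℝ] X) with hK
  have hKclosed : IsClosed (K : Set X) := by
    have : (K : Set X) = Set.range T := by
      ext z; simp [hK, LinearMap.mem_range]
    rw [this]
    exact hanti.isClosed_range T.uniformContinuous
  haveI : CompleteSpace K := hKclosed.completeSpace_coe
  have hbot : Kᗮ = ⊥ := by
    rw [Submodule.eq_bot_iff]
    intro y hy
    have hTy : T y = 0 := by
      have h1 : ∀ x : X, ⟪T y, x⟫ = 0 := by
        intro x
        have h2 : ⟪T x, y⟫ = 0 :=
          (Submodule.mem_orthogonal K y).mp hy (T x) (LinearMap.mem_range_self _ x)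
        rw [key] at h2
        rw [key, hsym]
        exact h2
      have := h1 (T y)
      rwa [real_inner_self_eq_norm_sq, pow_eq_zero_iff (two_ne_zero), norm_eq_zero] at this
    exact hker y hTy
  have hsurj : Function.Surjective T := by
    have hKtop : K = ⊤ := Submodule.orthogonal_eq_bot_iff.mp hbot
    intro z
    have : z ∈ K := hKtop ▸ Submodule.mem_top
    exact this
  exact ⟨⟨hinj, hsurj⟩, hup, hlow⟩
end

section
/- Assume the H(div) inf-sup condition: for all q in the orthocomplement of K_v, sup_{v∈V} (∇·v,q)/‖v‖_{H(div)} ≥ c₀‖q‖₀ with c₀ independent of parameters. Then with ‖v‖_V² = (κv,v) and the augmented norm ‖(u,v)‖_W² = ‖u‖_U² + ‖v‖_V² + β‖P_Q∇·(u+v)‖₀², for β ≥ κ one has sup_{(u,v)∈W} b^{II}(u,v;q)/‖(u,v)‖_W ≳ β^{-1/2}‖q‖₀ for all q in the orthocomplement of K_v, with constant independent of κ and β. -/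
open scoped RealInnerProductSpace

/-- From the `H(div)` inf-sup condition for the flux (with parameter-independent
constant `c₀`), the inf-sup condition for `b^{II}(u,v;q) = (∇·u,q) + (∇·v,q)` holds in
the augmented-Lagrangian norm
`‖(u,v)‖_W² = a^I(u,u) + κ‖v‖² + β‖P_Q∇·(u+v)‖₀²` with lower bound `β^{-1/2}‖q‖₀`,
for all `q ∈ Q` orthogonal to `K_v`, whenever `β ≥ κ`, with a constant independent
of `κ` and `β`. Here `‖v‖_{H(div)}² = ‖v‖₀² + ‖∇·v‖₀²`. -/
theorem stmt10
    {U E V L2 : Type*}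
    [NormedAddCommGroup U] [InnerProductSpace ℝ U]
    [NormedAddCommGroup E] [InnerProductSpace ℝ E]
    [NormedAddCommGroup V] [InnerProductSpace ℝ V]
    [NormedAddCommGroup L2] [InnerProductSpace ℝ L2]
    (Q : Submodule ℝ L2)
    (PQ : L2 →ₗ[ℝ] L2)
    (hPQn : ∀ w : L2, ‖PQ w‖ ≤ ‖w‖)
    (eps : U →ₗ[ℝ] E) (divU : U →ₗ[ℝ] L2) (divV : V →ₗ[ℝ] L2)
    (c₀ : ℝ) (hc₀ : 0 < c₀)
    -- H(div) inf-sup condition: for q ∈ Q orthogonal to K_v,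
    -- sup_v (∇·v,q)/‖v‖_{H(div)} ≥ c₀ ‖q‖₀
    (hinfsup : ∀ q ∈ Q,
      (∀ k ∈ Q, (∀ v : V, ⟪divV v, k⟫ = 0) → ⟪q, k⟫ = 0) →
      ∀ s : ℝ,
        (∀ v : V, ⟪divV v, q⟫ ≤ s * Real.sqrt (‖v‖ ^ 2 + ‖divV v‖ ^ 2)) →
        c₀ * ‖q‖ ≤ s) :
    ∃ c₁ > 0, ∀ μ lam κ β : ℝ, 0 < μ → 0 < lam → 0 < κ → 0 < β →
      κ ≤ β →
      ∀ q ∈ Q,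
        (∀ k ∈ Q, (∀ v : V, ⟪divV v, k⟫ = 0) → ⟪q, k⟫ = 0) →
        ∀ s : ℝ,
          (∀ (u : U) (v : V), ⟪divU u + divV v, q⟫ ≤
            s * Real.sqrt ((2 * μ * ‖eps u‖ ^ 2 + lam * ‖divU u‖ ^ 2) + κ * ‖v‖ ^ 2 +
              β * ‖PQ (divU u + divV v)‖ ^ 2)) →
          c₁ * ((Real.sqrt β)⁻¹ * ‖q‖) ≤ s := by
  refine ⟨c₀, hc₀, ?_⟩
  intro μ lam κ β hμ hlam hκ hβ hκβ q hq horth s hs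
  have hsβ : Real.sqrt β > 0 := Real.sqrt_pos.mpr hβ
  -- first: s ≥ 0
  have hs0 : 0 ≤ s := by
    by_cases hV : ∃ v : V, v ≠ 0
    · obtain ⟨v, hv⟩ := hV
      have h1 := hs 0 v
      have h2 := hs 0 (-v)
      simp only [map_zero, zero_add, norm_zero, map_neg, inner_neg_left, norm_neg] at h1 h2
      have hA : 0 < (2 * μ * (0:ℝ) ^ 2 + lam * (0:ℝ) ^ 2) + κ * ‖v‖ ^ 2 + β * ‖PQ (divV v)‖ ^ 2 := by
        have : 0 < ‖v‖ := norm_pos_iff.mpr hv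
        positivity
      have hsq : 0 < Real.sqrt ((2 * μ * (0:ℝ) ^ 2 + lam * (0:ℝ) ^ 2) + κ * ‖v‖ ^ 2 + β * ‖PQ (divV v)‖ ^ 2) :=
        Real.sqrt_pos.mpr hA
      nlinarith [h1, h2, hsq]
    · push_neg at hV
      have hq0 : q = 0 := by
        have := horth q hq (fun v => by rw [hV v]; simp)
        exact inner_self_eq_zero.mp this
      have := hinfsup q hq horth s (fun v => by
        rw [hV v, hq0]; simp)
      calc (0:ℝ) = c₀ * ‖q‖ := by simp [hq0]
        _ ≤ s := this
  -- main argument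
  have key : c₀ * ‖q‖ ≤ s * Real.sqrt β := by
    apply hinfsup q hq horth
    intro v
    have h := hs 0 v
    simp only [map_zero, zero_add, norm_zero] at h
    have hle : (2 * μ * (0:ℝ) ^ 2 + lam * (0:ℝ) ^ 2) + κ * ‖v‖ ^ 2 + β * ‖PQ (divV v)‖ ^ 2
        ≤ β * (‖v‖ ^ 2 + ‖divV v‖ ^ 2) := by
      have h1 : ‖PQ (divV v)‖ ≤ ‖divV v‖ := hPQn _
      have h2 : κ * ‖v‖ ^ 2 ≤ β * ‖v‖ ^ 2 := by nlinarith [sq_nonneg ‖v‖]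
      have h3 : β * ‖PQ (divV v)‖ ^ 2 ≤ β * ‖divV v‖ ^ 2 :=
        mul_le_mul_of_nonneg_left (pow_le_pow_left₀ (norm_nonneg _) h1 2) hβ.le
      nlinarith
    calc ⟪divV v, q⟫ ≤ s * Real.sqrt ((2 * μ * (0:ℝ) ^ 2 + lam * (0:ℝ) ^ 2) + κ * ‖v‖ ^ 2 + β * ‖PQ (divV v)‖ ^ 2) := h
      _ ≤ s * Real.sqrt (β * (‖v‖ ^ 2 + ‖divV v‖ ^ 2)) := by
          exact mul_le_mul_of_nonneg_left (Real.sqrt_le_sqrt hle) hs0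
      _ = s * Real.sqrt β * Real.sqrt (‖v‖ ^ 2 + ‖divV v‖ ^ 2) := by
          rw [Real.sqrt_mul hβ.le, mul_assoc]
  rw [mul_comm (Real.sqrt β)⁻¹, ← mul_assoc, ← div_eq_mul_inv, div_le_iff₀ hsβ]
  exact key
end

section
/- Define norms ‖(u,v)‖_W² = ‖u‖_U² + ‖v‖_V² + β‖P_Q∇·v‖₀² and ‖q‖_Q² = β^{-1}‖q‖₀² with β = min{max{μ,λ}, κ}. Then b^{II}(u,v;q) = (∇·u,q) + (∇·v,q) is uniformly bounded: b^{II}(u,v;q) ≲ ‖(u,v)‖_W ‖q‖_Q with constant independent of μ, λ, κ, β, using ‖∇·u‖₀ ≲ (2μ‖ε(u)‖₀² + λ‖∇·u‖₀²)^{1/2}β^{-1/2}·β^{1/2} ≲ ‖u‖_U and ‖P_Q∇·v‖₀ ≤ β^{-1/2}·β^{1/2}‖P_Q∇·v‖₀. -/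
open scoped RealInnerProductSpace

/-- Uniform boundedness of `b^{II}(u,v;q) = (∇·u,q) + (∇·v,q)` in the block-diagonal
norms `‖(u,v)‖_W² = a^I(u,u) + κ‖v‖² + β‖P_Q∇·v‖₀²` and `‖q‖_Q² = β⁻¹‖q‖₀²` with
`β = min{max{μ,λ}, κ}`: the constant is independent of `μ, λ, κ, β` (it depends only
on the dimension constant `Cn` in `‖∇·u‖₀² ≤ Cn ‖ε(u)‖₀²`). -/
theorem stmt11
    {U E V L2 : Type*}
    [NormedAddCommGroup U] [InnerProductSpace ℝ U]
    [NormedAddCommGroup E] [InnerProductSpace ℝ E]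
    [NormedAddCommGroup V] [InnerProductSpace ℝ V]
    [NormedAddCommGroup L2] [InnerProductSpace ℝ L2]
    (Q : Submodule ℝ L2)
    (PQ : L2 →ₗ[ℝ] L2)
    -- PQ is the orthogonal projection onto Q
    (hPQmem : ∀ w : L2, PQ w ∈ Q)
    (hPQ : ∀ w : L2, ∀ q ∈ Q, ⟪w - PQ w, q⟫ = 0)
    (eps : U →ₗ[ℝ] E) (divU : U →ₗ[ℝ] L2) (divV : V →ₗ[ℝ] L2)
    (Cn : ℝ) (hCn : 0 < Cn)
    -- ‖∇·u‖₀² ≤ n ‖ε(u)‖₀²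
    (hde : ∀ u : U, ‖divU u‖ ^ 2 ≤ Cn * ‖eps u‖ ^ 2) :
    ∃ C > 0, ∀ μ lam κ : ℝ, 0 < μ → 0 < lam → 0 < κ →
      ∀ (u : U) (v : V), ∀ q ∈ Q,
        ⟪divU u, q⟫ + ⟪divV v, q⟫ ≤
          C * Real.sqrt ((2 * μ * ‖eps u‖ ^ 2 + lam * ‖divU u‖ ^ 2) + κ * ‖v‖ ^ 2 +
              min (max μ lam) κ * ‖PQ (divV v)‖ ^ 2) *
            Real.sqrt ((min (max μ lam) κ)⁻¹ * ‖q‖ ^ 2) := by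
  set C1 : ℝ := Cn / 2 + 1 with hC1
  have hC1pos : 0 < C1 := by positivity
  refine ⟨Real.sqrt C1 + 1, by positivity, ?_⟩
  intro μ lam κ hμ hlam hκ u v q hq
  set β : ℝ := min (max μ lam) κ with hβdef
  have hβ : 0 < β := lt_min (lt_of_lt_of_le hμ (le_max_left _ _)) hκ
  set Wsq : ℝ := (2 * μ * ‖eps u‖ ^ 2 + lam * ‖divU u‖ ^ 2) + κ * ‖v‖ ^ 2 +
      β * ‖PQ (divV v)‖ ^ 2 with hWsq
  have hWsqnn : 0 ≤ Wsq := by positivity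
  set Qsq : ℝ := β⁻¹ * ‖q‖ ^ 2 with hQsq
  have hQsqnn : 0 ≤ Qsq := by positivity
  -- β ‖divU u‖² ≤ C1 * Wsq
  have hβle : β ≤ μ + lam :=
    le_trans (min_le_left _ _) (max_le (by linarith) (by linarith))
  have key1 : β * ‖divU u‖ ^ 2 ≤ C1 * Wsq := by
    have h1 := hde u
    have h2 : β * ‖divU u‖ ^ 2 ≤ μ * ‖divU u‖ ^ 2 + lam * ‖divU u‖ ^ 2 := by
      nlinarith [sq_nonneg (‖divU u‖), hβle]
    have h3 : μ * ‖divU u‖ ^ 2 ≤ μ * (Cn * ‖eps u‖ ^ 2) :=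
      mul_le_mul_of_nonneg_left h1 hμ.le
    rw [hC1, hWsq]
    nlinarith [mul_nonneg hμ.le (sq_nonneg (‖eps u‖)),
      mul_nonneg hκ.le (sq_nonneg (‖v‖)), mul_nonneg hβ.le (sq_nonneg (‖PQ (divV v)‖)),
      mul_nonneg hlam.le (sq_nonneg (‖divU u‖)),
      mul_nonneg hCn.le (mul_nonneg hlam.le (sq_nonneg (‖divU u‖))),
      mul_nonneg hCn.le (mul_nonneg hκ.le (sq_nonneg (‖v‖))),
      mul_nonneg hCn.le (mul_nonneg hβ.le (sq_nonneg (‖PQ (divV v)‖)))]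
  have key2 : β * ‖PQ (divV v)‖ ^ 2 ≤ Wsq := by
    nlinarith [mul_nonneg hμ.le (sq_nonneg (‖eps u‖)),
      mul_nonneg hlam.le (sq_nonneg (‖divU u‖)), mul_nonneg hκ.le (sq_nonneg (‖v‖))]
  -- first term
  have hterm1 : ⟪divU u, q⟫ ≤ Real.sqrt C1 * Real.sqrt Wsq * Real.sqrt Qsq :=
    calc ⟪divU u, q⟫ ≤ ‖divU u‖ * ‖q‖ := real_inner_le_norm _ _
    _ ≤ Real.sqrt C1 * Real.sqrt Wsq * Real.sqrt Qsq := by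
        rw [show Real.sqrt C1 * Real.sqrt Wsq * Real.sqrt Qsq
            = Real.sqrt (C1 * Wsq * Qsq) by
          rw [← Real.sqrt_mul hC1pos.le, ← Real.sqrt_mul (by positivity : (0:ℝ) ≤ C1 * Wsq)]]
        rw [show ‖divU u‖ * ‖q‖ = Real.sqrt ((‖divU u‖ * ‖q‖) ^ 2) by
          rw [Real.sqrt_sq (by positivity)]]
        apply Real.sqrt_le_sqrt
        have : (‖divU u‖ * ‖q‖) ^ 2 = (β * ‖divU u‖ ^ 2) * (β⁻¹ * ‖q‖ ^ 2) := by
          field_simp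
        rw [this, hQsq]
        have hq2 : (0:ℝ) ≤ β⁻¹ * ‖q‖ ^ 2 := by positivity
        calc β * ‖divU u‖ ^ 2 * (β⁻¹ * ‖q‖ ^ 2)
            ≤ C1 * Wsq * (β⁻¹ * ‖q‖ ^ 2) := mul_le_mul_of_nonneg_right key1 hq2
          _ = C1 * Wsq * (β⁻¹ * ‖q‖ ^ 2) := rfl
  -- second term: ⟪divV v, q⟫ = ⟪PQ (divV v), q⟫
  have hproj : ⟪divV v, q⟫ = ⟪PQ (divV v), q⟫ := by
    have := hPQ (divV v) q hq
    rw [inner_sub_left] at this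
    linarith
  have hterm2 : ⟪divV v, q⟫ ≤ Real.sqrt Wsq * Real.sqrt Qsq := by
    rw [hproj]
    calc ⟪PQ (divV v), q⟫ ≤ ‖PQ (divV v)‖ * ‖q‖ := real_inner_le_norm _ _
    _ ≤ Real.sqrt Wsq * Real.sqrt Qsq := by
        rw [show Real.sqrt Wsq * Real.sqrt Qsq = Real.sqrt (Wsq * Qsq) by
          rw [← Real.sqrt_mul hWsqnn]]
        rw [show ‖PQ (divV v)‖ * ‖q‖ = Real.sqrt ((‖PQ (divV v)‖ * ‖q‖) ^ 2) by
          rw [Real.sqrt_sq (by positivity)]]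
        apply Real.sqrt_le_sqrt
        have : (‖PQ (divV v)‖ * ‖q‖) ^ 2
            = (β * ‖PQ (divV v)‖ ^ 2) * (β⁻¹ * ‖q‖ ^ 2) := by
          field_simp
        rw [this, hQsq]
        exact mul_le_mul_of_nonneg_right key2 (by positivity)
  calc ⟪divU u, q⟫ + ⟪divV v, q⟫
      ≤ Real.sqrt C1 * Real.sqrt Wsq * Real.sqrt Qsq + Real.sqrt Wsq * Real.sqrt Qsq :=
        add_le_add hterm1 hterm2
    _ = (Real.sqrt C1 + 1) * Real.sqrt Wsq * Real.sqrt Qsq := by ring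
end

section
/- With the norm ‖(u,v)‖_W² = ‖u‖_U² + ‖v‖_V² + β‖P_Q∇·v‖₀² where β = min{max{μ,λ}, κ}, the form a^{II}(u,v;u,v) = a^I(u,u) + (κv,v) is coercive on the kernel Z^{II} = {(u,v) : (∇·(u+v),q) = 0 ∀q ∈ Q}: there is a constant c > 0 independent of μ, λ, κ such that a^{II}(u,v;u,v) ≥ c‖(u,v)‖_W² for all (u,v) ∈ Z^{II}. -/
open scoped RealInnerProductSpace

/-- Coercivity of `a^{II}(u,v;u,v) = a^I(u,u) + κ‖v‖²` on the kernel
`Z^{II} = {(u,v) : (∇·(u+v),q) = 0 ∀ q ∈ Q}` with respect to the norm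
`‖(u,v)‖_W² = a^I(u,u) + κ‖v‖² + β‖P_Q∇·v‖₀²` where `β = min{max{μ,λ}, κ}`: there is
`c > 0` independent of `μ, λ, κ` with `a^{II}(u,v;u,v) ≥ c‖(u,v)‖_W²` on `Z^{II}`. -/
theorem stmt12
    {U E V L2 : Type*}
    [NormedAddCommGroup U] [InnerProductSpace ℝ U]
    [NormedAddCommGroup E] [InnerProductSpace ℝ E]
    [NormedAddCommGroup V] [InnerProductSpace ℝ V]
    [NormedAddCommGroup L2] [InnerProductSpace ℝ L2]
    (Q : Submodule ℝ L2)
    (PQ : L2 →ₗ[ℝ] L2)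
    -- PQ is the orthogonal projection onto Q
    (hPQmem : ∀ w : L2, PQ w ∈ Q)
    (hPQ : ∀ w : L2, ∀ q ∈ Q, ⟪w - PQ w, q⟫ = 0)
    (hPQn : ∀ w : L2, ‖PQ w‖ ≤ ‖w‖)
    (eps : U →ₗ[ℝ] E) (divU : U →ₗ[ℝ] L2) (divV : V →ₗ[ℝ] L2)
    (Cn : ℝ) (hCn : 0 < Cn)
    -- ‖∇·u‖₀² ≤ n ‖ε(u)‖₀²
    (hde : ∀ u : U, ‖divU u‖ ^ 2 ≤ Cn * ‖eps u‖ ^ 2) :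
    ∃ c > 0, ∀ μ lam κ : ℝ, 0 < μ → 0 < lam → 0 < κ →
      ∀ (u : U) (v : V),
        (∀ q ∈ Q, ⟪divU u + divV v, q⟫ = 0) →
        c * ((2 * μ * ‖eps u‖ ^ 2 + lam * ‖divU u‖ ^ 2) + κ * ‖v‖ ^ 2 +
            min (max μ lam) κ * ‖PQ (divV v)‖ ^ 2) ≤
          (2 * μ * ‖eps u‖ ^ 2 + lam * ‖divU u‖ ^ 2) + κ * ‖v‖ ^ 2 := by
  refine ⟨1 / (1 + max 1 (Cn / 2)), by positivity, ?_⟩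
  intro μ lam κ hμ hlam hκ u v hker
  -- PQ of the sum vanishes
  have hPQ0 : PQ (divU u + divV v) = 0 := by
    have h1 := hker (PQ (divU u + divV v)) (hPQmem _)
    have h2 := hPQ (divU u + divV v) (PQ (divU u + divV v)) (hPQmem _)
    rw [inner_sub_left, h1] at h2
    have h3 : ⟪PQ (divU u + divV v), PQ (divU u + divV v)⟫ = 0 := by linarith
    exact inner_self_eq_zero.mp h3
  have hsum : PQ (divV v) = - PQ (divU u) := by
    rw [map_add] at hPQ0
    exact eq_neg_of_add_eq_zero_right hPQ0
  have hnorm : ‖PQ (divV v)‖ ≤ ‖divU u‖ := by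
    rw [hsum, norm_neg]; exact hPQn _
  have hnorm2 : ‖PQ (divV v)‖ ^ 2 ≤ ‖divU u‖ ^ 2 := by
    have := norm_nonneg (PQ (divV v)); nlinarith
  set K := max 1 (Cn / 2) with hK
  have hK1 : (1:ℝ) ≤ K := le_max_left _ _
  have hK2 : Cn / 2 ≤ K := le_max_right _ _
  set A := 2 * μ * ‖eps u‖ ^ 2 + lam * ‖divU u‖ ^ 2 with hA
  have hA0 : 0 ≤ A := by positivity
  have hB0 : 0 ≤ κ * ‖v‖ ^ 2 := by positivity
  have key : min (max μ lam) κ * ‖PQ (divV v)‖ ^ 2 ≤ K * A := by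
    have hmin : min (max μ lam) κ ≤ max μ lam := min_le_left _ _
    have hPQpos : (0:ℝ) ≤ ‖PQ (divV v)‖ ^ 2 := by positivity
    rcases le_total μ lam with h | h
    · have hmax : max μ lam = lam := max_eq_right h
      have hmin' : min (max μ lam) κ ≤ lam := le_of_le_of_eq hmin hmax
      have h1 : min (max μ lam) κ * ‖PQ (divV v)‖ ^ 2 ≤ lam * ‖divU u‖ ^ 2 :=
        mul_le_mul hmin' hnorm2 hPQpos hlam.le
      have h2 : lam * ‖divU u‖ ^ 2 ≤ A := by nlinarith [sq_nonneg ‖eps u‖]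
      nlinarith [h1, h2, hA0, hK1]
    · have hmax : max μ lam = μ := max_eq_left h
      have hmin' : min (max μ lam) κ ≤ μ := le_of_le_of_eq hmin hmax
      have h1 : min (max μ lam) κ * ‖PQ (divV v)‖ ^ 2 ≤ μ * ‖divU u‖ ^ 2 :=
        mul_le_mul hmin' hnorm2 hPQpos hμ.le
      have h2 : μ * ‖divU u‖ ^ 2 ≤ μ * (Cn * ‖eps u‖ ^ 2) :=
        mul_le_mul_of_nonneg_left (hde u) hμ.le
      have h3 : μ * (Cn * ‖eps u‖ ^ 2) ≤ K * A := by
        have : μ * (Cn * ‖eps u‖ ^ 2) = (Cn / 2) * (2 * μ * ‖eps u‖ ^ 2) := by ring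
        rw [this]
        have h4 : (Cn / 2) * (2 * μ * ‖eps u‖ ^ 2) ≤ K * (2 * μ * ‖eps u‖ ^ 2) := by
          apply mul_le_mul_of_nonneg_right hK2; positivity
        have h5 : K * (2 * μ * ‖eps u‖ ^ 2) ≤ K * A := by
          apply mul_le_mul_of_nonneg_left _ (le_trans zero_le_one hK1)
          nlinarith [sq_nonneg ‖divU u‖]
        exact h4.trans h5
      linarith
  have hKpos : (0:ℝ) < 1 + K := by linarith
  rw [div_mul_eq_mul_div, one_mul, div_le_iff₀ hKpos]
  nlinarith [key, hA0, hB0]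
end

section
/- Under the norms ‖(u,v)‖_W² = ‖u‖_U² + ‖v‖_V² and ‖q‖_Q² = β^{-1}‖q‖₀² + ‖div*_V q‖²_{V'} with β = max{μ,λ}, assuming both inf-sup conditions sup_{u∈U}(∇·u,q)/‖u‖₁ ≳ ‖q‖₀ and sup_{v∈V}(∇·v,q)/‖v‖_{H(div)} ≳ ‖q‖₀, the combined inf-sup holds: sup_{(u,v)∈W} b^{II}(u,v;q)/‖(u,v)‖_W ≳ ‖q‖_Q for all q ∈ Q, with implicit constant independent of μ, λ, κ. -/
open scoped RealInnerProductSpace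

/-- Combined inf-sup condition in the dual-norm setting: with
`‖(u,v)‖_W² = a^I(u,u) + κ‖v‖²` and `‖q‖_Q² = β⁻¹‖q‖₀² + ‖div*_V q‖²_{V'}`,
`β = max{μ,λ}`, assuming the `H¹` inf-sup condition for `∇·u` and the `H(div)`
inf-sup condition for `∇·v` (with parameter-independent constants), one has
`sup_{(u,v)} b^{II}(u,v;q)/‖(u,v)‖_W ≳ ‖q‖_Q` with constant independent of
`μ, λ, κ`.  Here `dstar q = ‖div*_V q‖_{V'}` is the dual norm with respect to
`‖v‖_V = (κ‖v‖²)^{1/2}`, characterized as the least upper bound. -/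
theorem stmt14
    {U E V Q : Type*}
    [NormedAddCommGroup U] [InnerProductSpace ℝ U]
    [NormedAddCommGroup E] [InnerProductSpace ℝ E]
    [NormedAddCommGroup V] [InnerProductSpace ℝ V]
    [NormedAddCommGroup Q] [InnerProductSpace ℝ Q]
    (eps : U →ₗ[ℝ] E) (divU : U →ₗ[ℝ] Q) (divV : V →ₗ[ℝ] Q)
    (Cd c₀ c₀' : ℝ) (hCd : 0 < Cd) (hc₀ : 0 < c₀) (hc₀' : 0 < c₀')
    (heps : ∀ u : U, ‖eps u‖ ≤ ‖u‖)
    (hdivU : ∀ u : U, ‖divU u‖ ≤ Cd * ‖u‖)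
    -- H¹ inf-sup condition for the displacement
    (hinfsupU : ∀ q : Q, ∀ s : ℝ, (∀ u : U, ⟪divU u, q⟫ ≤ s * ‖u‖) → c₀ * ‖q‖ ≤ s)
    -- H(div) inf-sup condition for the flux
    (hinfsupV : ∀ q : Q, ∀ s : ℝ,
      (∀ v : V, ⟪divV v, q⟫ ≤ s * Real.sqrt (‖v‖ ^ 2 + ‖divV v‖ ^ 2)) →
      c₀' * ‖q‖ ≤ s) :
    ∃ c₁ > 0, ∀ μ lam κ : ℝ, 0 < μ → 0 < lam → 0 < κ →
      ∀ dstar : Q → ℝ,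
        -- dstar q = ‖div*_V q‖_{V'} : upper bound...
        (∀ (q : Q) (v : V), ⟪divV v, q⟫ ≤ dstar q * Real.sqrt (κ * ‖v‖ ^ 2)) →
        -- ...and least such
        (∀ (q : Q) (s : ℝ),
          (∀ v : V, ⟪divV v, q⟫ ≤ s * Real.sqrt (κ * ‖v‖ ^ 2)) → dstar q ≤ s) →
        ∀ (q : Q) (s : ℝ),
          (∀ (u : U) (v : V), ⟪divU u, q⟫ + ⟪divV v, q⟫ ≤
            s * Real.sqrt ((2 * μ * ‖eps u‖ ^ 2 + lam * ‖divU u‖ ^ 2) + κ * ‖v‖ ^ 2)) →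
          c₁ * Real.sqrt ((max μ lam)⁻¹ * ‖q‖ ^ 2 + dstar q ^ 2) ≤ s := by
  refine ⟨c₀ / Real.sqrt (c₀ ^ 2 + 2 + Cd ^ 2), by positivity, ?_⟩
  intro μ lam κ hμ hlam hκ dstar hub hleast q s hs
  set β := max μ lam with hβdef
  have hβ : 0 < β := lt_max_of_lt_left hμ
  have hμβ : μ ≤ β := le_max_left _ _
  have hlamβ : lam ≤ β := le_max_right _ _
  -- dstar q ≥ 0
  have hdnn : 0 ≤ dstar q := by
    by_cases hV : ∃ v : V, v ≠ 0
    · obtain ⟨v, hv⟩ := hV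
      have h1 := hub q v
      have h2 := hub q (-v)
      rw [map_neg, inner_neg_left, norm_neg] at h2
      have hc : 0 < Real.sqrt (κ * ‖v‖ ^ 2) := by
        have : 0 < ‖v‖ := norm_pos_iff.mpr hv
        positivity
      nlinarith [h1, h2, hc]
    · push_neg at hV
      exfalso
      have := hleast q (dstar q - 1) (fun v => by
        rw [hV v]; simp)
      linarith
  -- dstar q ≤ s
  have hds : dstar q ≤ s := by
    apply hleast q s
    intro v
    have := hs 0 v
    simpa using this
  have hsnn : 0 ≤ s := le_trans hdnn hds
  -- U part
  have hUpart : c₀ * ‖q‖ ≤ s * Real.sqrt (β * (2 + Cd ^ 2)) := by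
    apply hinfsupU q
    intro u
    have h := hs u 0
    simp only [norm_zero] at h
    have hz : (2 * μ * ‖eps u‖ ^ 2 + lam * ‖divU u‖ ^ 2) + κ * 0 ^ 2
        ≤ β * (2 + Cd ^ 2) * ‖u‖ ^ 2 := by
      have h1 := heps u
      have h2 := hdivU u
      have hnn : (0:ℝ) ≤ ‖eps u‖ := norm_nonneg _
      have hnn2 : (0:ℝ) ≤ ‖divU u‖ := norm_nonneg _
      have hnn3 : (0:ℝ) ≤ ‖u‖ := norm_nonneg _
      have he2 : ‖eps u‖ ^ 2 ≤ ‖u‖ ^ 2 := by nlinarith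
      have hd2 : ‖divU u‖ ^ 2 ≤ Cd ^ 2 * ‖u‖ ^ 2 := by nlinarith
      nlinarith [mul_le_mul_of_nonneg_left he2 hμ.le,
        mul_le_mul_of_nonneg_left hd2 hlam.le,
        mul_le_mul_of_nonneg_right hμβ (sq_nonneg ‖u‖),
        mul_le_mul_of_nonneg_right hlamβ
          (mul_nonneg (sq_nonneg Cd) (sq_nonneg ‖u‖))]
    have hmono := Real.sqrt_le_sqrt hz
    have heq : Real.sqrt (β * (2 + Cd ^ 2) * ‖u‖ ^ 2)
        = Real.sqrt (β * (2 + Cd ^ 2)) * ‖u‖ := by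
      rw [Real.sqrt_mul (by positivity), Real.sqrt_sq (norm_nonneg _)]
    have : ⟪divU u, q⟫ + ⟪divV (0:V), q⟫ ≤ s * (Real.sqrt (β * (2 + Cd ^ 2)) * ‖u‖) := by
      calc ⟪divU u, q⟫ + ⟪divV (0:V), q⟫ ≤ s * Real.sqrt ((2 * μ * ‖eps u‖ ^ 2 + lam * ‖divU u‖ ^ 2) + κ * ‖(0:V)‖ ^ 2) := hs u 0
        _ ≤ s * (Real.sqrt (β * (2 + Cd ^ 2)) * ‖u‖) := by
            rw [norm_zero]
            exact mul_le_mul_of_nonneg_left (heq ▸ hmono) hsnn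
    simpa [mul_assoc] using this
  -- square the U part
  have hUsq : β⁻¹ * ‖q‖ ^ 2 ≤ s ^ 2 * (2 + Cd ^ 2) / c₀ ^ 2 := by
    have h1 : (c₀ * ‖q‖) ^ 2 ≤ (s * Real.sqrt (β * (2 + Cd ^ 2))) ^ 2 := by
      exact pow_le_pow_left₀ (by positivity) hUpart 2
    rw [mul_pow, mul_pow, Real.sq_sqrt (by positivity)] at h1
    have hβinv : 0 < β⁻¹ := inv_pos.mpr hβ
    rw [div_eq_mul_inv]
    have := mul_le_mul_of_nonneg_left h1 (le_of_lt (mul_pos hβinv (inv_pos.mpr (pow_pos hc₀ 2))))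
    calc β⁻¹ * ‖q‖ ^ 2 = (β⁻¹ * (c₀ ^ 2)⁻¹) * (c₀ ^ 2 * ‖q‖ ^ 2) := by
          field_simp
      _ ≤ (β⁻¹ * (c₀ ^ 2)⁻¹) * (s ^ 2 * (β * (2 + Cd ^ 2))) := this
      _ = s ^ 2 * (2 + Cd ^ 2) * (c₀ ^ 2)⁻¹ := by
          field_simp
  have hdsq : dstar q ^ 2 ≤ s ^ 2 := by nlinarith
  -- conclude
  set X := β⁻¹ * ‖q‖ ^ 2 + dstar q ^ 2 with hXdef
  have hXnn : 0 ≤ X := by positivity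
  set c₁ := c₀ / Real.sqrt (c₀ ^ 2 + 2 + Cd ^ 2) with hc₁def
  have hc₁pos : 0 < c₁ := by positivity
  have hc₁sq : c₁ ^ 2 = c₀ ^ 2 / (c₀ ^ 2 + 2 + Cd ^ 2) := by
    rw [hc₁def, div_pow, Real.sq_sqrt (by positivity)]
  have key : c₁ ^ 2 * X ≤ s ^ 2 := by
    rw [hc₁sq]
    have hden : (0:ℝ) < c₀ ^ 2 + 2 + Cd ^ 2 := by positivity
    rw [div_mul_eq_mul_div, div_le_iff₀ hden]
    have hX2 : X ≤ s ^ 2 * (2 + Cd ^ 2) / c₀ ^ 2 + s ^ 2 := by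
      rw [hXdef]; linarith
    have hc2 : (0:ℝ) < c₀ ^ 2 := by positivity
    calc c₀ ^ 2 * X ≤ c₀ ^ 2 * (s ^ 2 * (2 + Cd ^ 2) / c₀ ^ 2 + s ^ 2) := by
          exact mul_le_mul_of_nonneg_left hX2 (le_of_lt hc2)
      _ = s ^ 2 * (c₀ ^ 2 + 2 + Cd ^ 2) := by field_simp; ring
  calc c₁ * Real.sqrt X = Real.sqrt (c₁ ^ 2 * X) := by
        rw [Real.sqrt_mul (by positivity), Real.sqrt_sq hc₁pos.le]
    _ ≤ Real.sqrt (s ^ 2) := Real.sqrt_le_sqrt key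
    _ = s := Real.sqrt_sq hsnn
end

section
/- Let M, N be Hilbert spaces, a and c symmetric positive semi-definite bounded bilinear forms on M and N respectively, b bounded on M×N, with a coercive on the kernel Z = {u : b(u,q)=0 ∀q} (a(u,u) ≥ γ_a‖u‖_M² for u ∈ Z), c coercive on the kernel K = {p : b(φ,p)=0 ∀φ} (c(q,q) ≥ γ_c‖q‖_N² for q ∈ K), c bounded (c(p,q) ≤ C_c‖p‖_N‖q‖_N), and b satisfying the inf-sup condition sup_u b(u,q)/‖u‖_M ≥ γ_b‖q̄‖_N for q̄ the projection of q onto K^⊥. Then the saddle point problem a(u,φ) + b(φ,p) = ⟨f,φ⟩, b(u,q) − c(p,q) = ⟨g,q⟩ has a unique solution satisfying ‖u‖_M + ‖p‖_N ≤ C(‖f‖_{M'} + ‖g‖_{N'}) with C depending only on the constants C_a, C_b, C_c, γ_a, γ_b, γ_c. -/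
open scoped RealInnerProductSpace

set_option maxHeartbeats 1000000

private lemma sqle {x y : ℝ} (hy : 0 ≤ y) (h : x^2 ≤ y^2) : x ≤ y := by
  nlinarith [sq_nonneg (x - y), sq_nonneg (x + y)]

private lemma cs_bilin {V : Type*} [AddCommGroup V] [Module ℝ V] (a : V →ₗ[ℝ] V →ₗ[ℝ] ℝ)
    (hs : ∀ x y, a x y = a y x) (hp : ∀ x, 0 ≤ a x x) (x y : V) :
    (a x y)^2 ≤ a x x * a y y := by
  have h : ∀ t : ℝ, 0 ≤ a y y * (t*t) + (2 * a x y) * t + a x x := by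
    intro t
    have e := hp (x + t • y)
    simp only [map_add, map_smul, LinearMap.add_apply, LinearMap.smul_apply, smul_eq_mul] at e
    rw [hs y x] at e
    nlinarith [e]
  have := discrim_le_zero h
  rw [discrim] at this
  nlinarith

private lemma helper1 (ra rc A1 A2 sa sc α σ F G X Y : ℝ)
    (hra : 0 < ra) (hrc : 0 < rc) (hA1 : 0 < A1) (hA2 : 0 < A2)
    (hsa : 0 ≤ sa) (hsc : 0 ≤ sc) (hα : 0 ≤ α) (hσ : 0 ≤ σ) (hF : 0 ≤ F) (hG : 0 ≤ G)
    (hXc : X ≤ α/ra + A1*(G + sc*σ)) (hYc : Y ≤ σ/rc + A2*(F + sa*α)) :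
    X + Y ≤ (1/ra + 1/rc + A1*sc + A2*sa) * (α + σ) + (A1 + A2) * (F + G) := by
  have k1 : 0 ≤ α/rc := by positivity
  have k2 : 0 ≤ σ/ra := by positivity
  have k3 : 0 ≤ A1*sc*α := by positivity
  have k4 : 0 ≤ A2*sa*σ := by positivity
  have k5 : 0 ≤ A1*F := by positivity
  have k6 : 0 ≤ A2*G := by positivity
  have e1 : α/ra = (1/ra)*α := by ring
  have e2 : σ/rc = (1/rc)*σ := by ring
  have e3 : α/rc = (1/rc)*α := by ring
  have e4 : σ/ra = (1/ra)*σ := by ring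
  nlinarith [k1,k2,k3,k4,k5,k6]

private lemma helper2 (E1 E2 D t : ℝ) (hE1 : 0 < E1) (hE2 : 0 < E2) (hD : 0 ≤ D) (ht : 0 ≤ t)
    (h : t^2 ≤ 2*E1*D*t + 2*E2*D^2) : t ≤ (2*E1 + E2 + 1)*D := by
  have h1 : (t - E1*D)^2 ≤ ((E1+E2+1)*D)^2 := by
    have k1 : 0 ≤ E1*E2*D^2 := by positivity
    have k2 : 0 ≤ E1*D^2 := by positivity
    have k3 : 0 ≤ E2^2*D^2 := by positivity
    nlinarith [k1,k2,k3]
  have h2 : t - E1*D ≤ (E1+E2+1)*D := sqle (by positivity) h1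
  nlinarith [mul_nonneg hE1.le hD]

private lemma helper3 (α σ F G X Y E1 E2 : ℝ)
    (hα : 0 ≤ α) (hσ : 0 ≤ σ) (hF : 0 ≤ F) (hG : 0 ≤ G) (hX : 0 ≤ X) (hY : 0 ≤ Y)
    (hD : 0 ≤ F + G)
    (e1 : α^2 + σ^2 ≤ F*X + G*Y)
    (hXY : X + Y ≤ E1*(α + σ) + E2*(F + G)) :
    (α + σ)^2 ≤ 2*E1*(F+G)*(α+σ) + 2*E2*(F+G)^2 := by
  have h1 : F*X + G*Y ≤ (F+G)*(X+Y) := by nlinarith [mul_nonneg hF hY, mul_nonneg hG hX]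
  have h2 : (F+G)*(X+Y) ≤ (F+G)*(E1*(α+σ) + E2*(F+G)) := mul_le_mul_of_nonneg_left hXY hD
  nlinarith [sq_nonneg (α - σ)]

private lemma brezzi_scalar (sa sc ra rc gb α σ F G X Y n0 n1 m0 m1 A1 A2 E1 E2 : ℝ)
    (hsa : 0 ≤ sa) (hsc : 0 ≤ sc) (hra : 0 < ra) (hrc : 0 < rc) (hgb : 0 < gb)
    (hα : 0 ≤ α) (hσ : 0 ≤ σ) (hF : 0 ≤ F) (hG : 0 ≤ G)
    (hX : 0 ≤ X) (hY : 0 ≤ Y) (hn1 : 0 ≤ n1) (hm1 : 0 ≤ m1)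
    (hA1 : A1 = (sa/ra + 1)/gb) (hA2 : A2 = (sc/rc + 1)/gb)
    (hE1 : E1 = 1/ra + 1/rc + A1*sc + A2*sa) (hE2 : E2 = A1 + A2)
    (e1 : α^2 + σ^2 ≤ F*X + G*Y)
    (e2 : gb*m1 ≤ F + sa*α) (e3 : gb*n1 ≤ G + sc*σ)
    (e4 : ra*n0 ≤ α + sa*n1) (e5 : rc*m0 ≤ σ + sc*m1)
    (e6 : X ≤ n0 + n1) (e7 : Y ≤ m0 + m1) :
    X + Y ≤ (E1*(2*E1+E2+1) + E2) * (F + G) := by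
  have hA1p : 0 < A1 := by rw [hA1]; positivity
  have hA2p : 0 < A2 := by rw [hA2]; positivity
  have hE1p : 0 < E1 := by rw [hE1]; positivity
  have hE2p : 0 < E2 := by rw [hE2]; positivity
  have hn1b : n1 ≤ (G + sc*σ)/gb := by rw [le_div_iff₀ hgb]; linarith
  have hm1b : m1 ≤ (F + sa*α)/gb := by rw [le_div_iff₀ hgb]; linarith
  have hn0b : n0 ≤ α/ra + (sa/ra)*n1 := by
    have h : n0 ≤ (α + sa*n1)/ra := by rw [le_div_iff₀ hra]; linarith
    have h2 : (α + sa*n1)/ra = α/ra + (sa/ra)*n1 := by field_simp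
    linarith
  have hm0b : m0 ≤ σ/rc + (sc/rc)*m1 := by
    have h : m0 ≤ (σ + sc*m1)/rc := by rw [le_div_iff₀ hrc]; linarith
    have h2 : (σ + sc*m1)/rc = σ/rc + (sc/rc)*m1 := by field_simp
    linarith
  have hXc : X ≤ α/ra + A1*(G + sc*σ) := by
    have h1 : (sa/ra + 1)*n1 ≤ (sa/ra + 1)*((G + sc*σ)/gb) := by
      apply mul_le_mul_of_nonneg_left hn1b; positivity
    have h2 : (sa/ra + 1)*((G + sc*σ)/gb) = A1*(G + sc*σ) := by rw [hA1]; ring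
    nlinarith [h1]
  have hYc : Y ≤ σ/rc + A2*(F + sa*α) := by
    have h1 : (sc/rc + 1)*m1 ≤ (sc/rc + 1)*((F + sa*α)/gb) := by
      apply mul_le_mul_of_nonneg_left hm1b; positivity
    have h2 : (sc/rc + 1)*((F + sa*α)/gb) = A2*(F + sa*α) := by rw [hA2]; ring
    linarith
  have hXY : X + Y ≤ E1*(α + σ) + E2*(F + G) := by
    rw [hE1, hE2]
    exact helper1 ra rc A1 A2 sa sc α σ F G X Y hra hrc hA1p hA2p hsa hsc hα hσ hF hG hXc hYc
  have ht2 := helper3 α σ F G X Y E1 E2 hα hσ hF hG hX hY (by linarith) e1 hXY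
  have hK := helper2 E1 E2 (F+G) (α+σ) hE1p hE2p (by linarith) (by linarith) ht2
  have hfin : E1*(α+σ) ≤ E1*((2*E1+E2+1)*(F+G)) := mul_le_mul_of_nonneg_left hK hE1p.le
  calc X + Y ≤ E1*(α+σ) + E2*(F+G) := hXY
    _ ≤ E1*((2*E1+E2+1)*(F+G)) + E2*(F+G) := by linarith
    _ = (E1*(2*E1+E2+1) + E2) * (F+G) := by ring

section setup
variable {M N : Type*}
    [NormedAddCommGroup M] [InnerProductSpace ℝ M] [CompleteSpace M]
    [NormedAddCommGroup N] [InnerProductSpace ℝ N] [CompleteSpace N]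

/-- Riesz representation of a bounded bilinear form as a continuous linear operator. -/
private noncomputable def rieszOp (b : M →ₗ[ℝ] N →ₗ[ℝ] ℝ) (Cb : ℝ)
    (h : ∀ u q, ‖b u q‖ ≤ Cb * ‖u‖ * ‖q‖) : M →L[ℝ] N :=
  ((InnerProductSpace.toDual ℝ N).symm.toContinuousLinearEquiv.toContinuousLinearMap).comp
    (LinearMap.mkContinuous₂ b Cb h)

private lemma rieszOp_apply (b : M →ₗ[ℝ] N →ₗ[ℝ] ℝ) (Cb : ℝ)
    (h : ∀ u q, ‖b u q‖ ≤ Cb * ‖u‖ * ‖q‖) (u : M) (q : N) :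
    ⟪rieszOp b Cb h u, q⟫ = b u q := by
  simp [rieszOp, InnerProductSpace.toDual_symm_apply]

end setup

/-- Brezzi-type well-posedness theorem for perturbed saddle point problems: with `a`
coercive on the kernel `Z` of `b`, `c` coercive on the kernel `K` of the adjoint of
`b`, `a, b, c` bounded, `a, c` symmetric positive semi-definite, and `b` satisfying
the inf-sup condition with respect to the projection onto `K^⊥`, the saddle point
problem `a(u,φ) + b(φ,p) = ⟨f,φ⟩`, `b(u,q) − c(p,q) = ⟨g,q⟩` has a unique solution
satisfying `‖u‖ + ‖p‖ ≤ C(‖f‖_{M'} + ‖g‖_{N'})` with `C` depending only on the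
constants `C_a, C_b, C_c, γ_a, γ_b, γ_c`. -/
theorem stmt15
    {M N : Type*}
    [NormedAddCommGroup M] [InnerProductSpace ℝ M] [CompleteSpace M]
    [NormedAddCommGroup N] [InnerProductSpace ℝ N] [CompleteSpace N]
    (a : M →ₗ[ℝ] M →ₗ[ℝ] ℝ) (b : M →ₗ[ℝ] N →ₗ[ℝ] ℝ) (c : N →ₗ[ℝ] N →ₗ[ℝ] ℝ)
    (Ca Cb Cc γa γb γc : ℝ)
    (hCa : 0 < Ca) (hCb : 0 < Cb) (hCc : 0 < Cc)
    (hγa : 0 < γa) (hγb : 0 < γb) (hγc : 0 < γc)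
    -- a symmetric positive semi-definite and bounded
    (ha_symm : ∀ u φ, a u φ = a φ u)
    (ha_psd : ∀ u, 0 ≤ a u u)
    (ha_bound : ∀ u φ, a u φ ≤ Ca * ‖u‖ * ‖φ‖)
    -- b bounded
    (hb_bound : ∀ u q, b u q ≤ Cb * ‖u‖ * ‖q‖)
    -- c symmetric positive semi-definite and bounded
    (hc_symm : ∀ p q, c p q = c q p)
    (hc_psd : ∀ q, 0 ≤ c q q)
    (hc_bound : ∀ p q, c p q ≤ Cc * ‖p‖ * ‖q‖)
    -- a coercive on the kernel Z of b
    (ha_coercive : ∀ u : M, (∀ q : N, b u q = 0) → γa * ‖u‖ ^ 2 ≤ a u u)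
    -- c coercive on the kernel K of the adjoint of b
    (hc_coercive : ∀ q : N, (∀ φ : M, b φ q = 0) → γc * ‖q‖ ^ 2 ≤ c q q)
    -- proj q is the orthogonal projection of q onto K^⊥
    (proj : N → N)
    (hproj_ker : ∀ (q : N) (φ : M), b φ (q - proj q) = 0)
    (hproj_orth : ∀ q k : N, (∀ φ : M, b φ k = 0) → ⟪proj q, k⟫ = 0)
    -- inf-sup condition for b
    (hb_infsup : ∀ q : N, ∀ s : ℝ, (∀ u : M, b u q ≤ s * ‖u‖) → γb * ‖proj q‖ ≤ s) :
    ∃ C > 0, ∀ (f : StrongDual ℝ M) (g : StrongDual ℝ N),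
      -- existence
      (∃ (u : M) (p : N), (∀ φ, a u φ + b φ p = f φ) ∧ (∀ q, b u q - c p q = g q)) ∧
      -- uniqueness
      (∀ (u : M) (p : N) (u' : M) (p' : N),
        ((∀ φ, a u φ + b φ p = f φ) ∧ (∀ q, b u q - c p q = g q)) →
        ((∀ φ, a u' φ + b φ p' = f φ) ∧ (∀ q, b u' q - c p' q = g q)) →
        u = u' ∧ p = p') ∧
      -- stability
      (∀ (u : M) (p : N),
        ((∀ φ, a u φ + b φ p = f φ) ∧ (∀ q, b u q - c p q = g q)) →
        ‖u‖ + ‖p‖ ≤ C * (‖f‖ + ‖g‖)) := by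

  -- two-sided bounds
  have ha_abs : ∀ u φ : M, ‖a u φ‖ ≤ Ca * ‖u‖ * ‖φ‖ := by
    intro u φ
    rw [Real.norm_eq_abs, abs_le]
    constructor
    · have h := ha_bound (-u) φ
      rw [map_neg, LinearMap.neg_apply, norm_neg] at h
      linarith
    · exact ha_bound u φ
  have hb_abs : ∀ u q, ‖b u q‖ ≤ Cb * ‖u‖ * ‖q‖ := by
    intro u q
    rw [Real.norm_eq_abs, abs_le]
    constructor
    · have h := hb_bound (-u) q
      rw [map_neg, LinearMap.neg_apply, norm_neg] at h
      linarith
    · exact hb_bound u q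
  have hc_abs : ∀ p q, ‖c p q‖ ≤ Cc * ‖p‖ * ‖q‖ := by
    intro p q
    rw [Real.norm_eq_abs, abs_le]
    constructor
    · have h := hc_bound (-p) q
      rw [map_neg, LinearMap.neg_apply, norm_neg] at h
      linarith
    · exact hc_bound p q
  have hbflip_abs : ∀ q u, ‖b.flip q u‖ ≤ Cb * ‖q‖ * ‖u‖ := by
    intro q u
    rw [LinearMap.flip_apply]
    calc ‖b u q‖ ≤ Cb * ‖u‖ * ‖q‖ := hb_abs u q
      _ = Cb * ‖q‖ * ‖u‖ := by ring
  -- operators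
  set Aop : M →L[ℝ] M := rieszOp a Ca ha_abs with hAdef
  set Bop : M →L[ℝ] N := rieszOp b Cb hb_abs with hBdef
  set Bst : N →L[ℝ] M := rieszOp b.flip Cb hbflip_abs with hBsdef
  set Cop : N →L[ℝ] N := rieszOp c Cc hc_abs with hCdef
  have hAop : ∀ u φ : M, ⟪Aop u, φ⟫ = a u φ := fun u φ => rieszOp_apply a Ca ha_abs u φ
  have hBop : ∀ (u : M) (q : N), ⟪Bop u, q⟫ = b u q := fun u q => rieszOp_apply b Cb hb_abs u q
  have hBst : ∀ (q : N) (φ : M), ⟪Bst q, φ⟫ = b φ q := fun q φ => by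
    have := rieszOp_apply b.flip Cb hbflip_abs q φ
    rwa [LinearMap.flip_apply] at this
  have hCop : ∀ p q : N, ⟪Cop p, q⟫ = c p q := fun p q => rieszOp_apply c Cc hc_abs p q
  -- kernel characterization
  have bKiff : ∀ k : N, (∀ φ : M, b φ k = 0) ↔ Bst k = 0 := by
    intro k
    constructor
    · intro h
      have : ⟪Bst k, Bst k⟫ = 0 := by rw [hBst]; exact h _
      exact inner_self_eq_zero.mp this
    · intro h φ
      rw [← hBst, h, inner_zero_left]
  -- proj is idempotent-like: fixed on vectors orthogonal to K
  have projfix : ∀ r : N, (∀ k : N, (∀ φ : M, b φ k = 0) → ⟪r, k⟫ = 0) → proj r = r := by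
    intro r hr
    have hk : ∀ φ : M, b φ (r - proj r) = 0 := hproj_ker r
    have h1 : ⟪proj r, r - proj r⟫ = 0 := hproj_orth r _ hk
    have h2 : ⟪r, r - proj r⟫ = 0 := hr _ hk
    have h3 : ⟪r - proj r, r - proj r⟫ = 0 := by
      rw [inner_sub_left, h1, h2, sub_zero]
    have h4 : r - proj r = 0 := inner_self_eq_zero.mp h3
    have := sub_eq_zero.mp h4
    exact this.symm
  -- Bst only sees the projection
  have L1 : ∀ q : N, Bst q = Bst (proj q) := by
    intro q
    have h0 : Bst (q - proj q) = 0 := (bKiff _).mp (hproj_ker q)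
    rw [map_sub] at h0
    have := sub_eq_zero.mp h0
    exact this
  -- inf-sup in operator form
  have L2 : ∀ q : N, γb * ‖proj q‖ ≤ ‖Bst q‖ := by
    intro q
    apply hb_infsup q ‖Bst q‖
    intro u
    calc b u q = ⟪Bst q, u⟫ := (hBst q u).symm
      _ ≤ ‖Bst q‖ * ‖u‖ := real_inner_le_norm _ _
  -- the kernel K of the adjoint and its orthogonal complement
  set K' : Submodule ℝ N := LinearMap.ker (Bst : N →ₗ[ℝ] M) with hK'def
  have memK' : ∀ k : N, k ∈ K' ↔ (∀ φ : M, b φ k = 0) := by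
    intro k
    rw [hK'def, LinearMap.mem_ker]
    exact (bKiff k).symm
  have projmem : ∀ q : N, proj q ∈ K'ᗮ := by
    intro q
    rw [Submodule.mem_orthogonal]
    intro k hk
    rw [real_inner_comm]
    exact hproj_orth q k ((memK' k).mp hk)
  have projfix' : ∀ r : N, r ∈ K'ᗮ → proj r = r := by
    intro r hr
    apply projfix
    intro k hk
    rw [real_inner_comm]
    exact (Submodule.mem_orthogonal K' r).mp hr k ((memK' k).mpr hk)
  haveI : CompleteSpace K'ᗮ := (Submodule.isClosed_orthogonal K').completeSpace_coe
  -- lower bound for Bst on K'ᗮ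
  have L3 : ∀ r : N, r ∈ K'ᗮ → γb * ‖r‖ ≤ ‖Bst r‖ := by
    intro r hr
    have := L2 r
    rwa [projfix' r hr] at this
  -- the range of Bst on K'ᗮ is a closed subspace
  set W : Submodule ℝ M := Submodule.map (Bst : N →ₗ[ℝ] M) K'ᗮ with hWdef
  set e : K'ᗮ →L[ℝ] M := Bst.comp (Submodule.subtypeL K'ᗮ) with hedef
  have heapp : ∀ x : K'ᗮ, e x = Bst (x : N) := fun x => rfl
  have hWrange : (W : Set M) = Set.range e := by
    ext m
    constructor
    · rintro ⟨q, hq, rfl⟩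
      exact ⟨⟨q, hq⟩, rfl⟩
    · rintro ⟨⟨q, hq⟩, rfl⟩
      exact ⟨q, hq, rfl⟩
  have hanti : AntilipschitzWith ⟨γb⁻¹, (le_of_lt (inv_pos.mpr hγb))⟩ e := by
    apply e.antilipschitz_of_bound
    intro x
    show ‖x‖ ≤ γb⁻¹ * ‖e x‖
    rw [heapp]
    have h1 : γb * ‖(x : N)‖ ≤ ‖Bst (x : N)‖ := L3 _ x.2
    have h2 : ‖x‖ = ‖(x : N)‖ := rfl
    rw [h2]
    exact (le_inv_mul_iff₀ hγb).mpr h1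
  have hWclosed : IsClosed (W : Set M) := by
    rw [hWrange]
    exact hanti.isClosed_range e.uniformContinuous
  haveI : CompleteSpace W := hWclosed.completeSpace_coe
  -- constants
  set sa : ℝ := Real.sqrt Ca with hsadef
  set sc : ℝ := Real.sqrt Cc with hscdef
  set ra : ℝ := Real.sqrt γa with hradef
  set rc : ℝ := Real.sqrt γc with hrcdef
  have hsa0 : 0 ≤ sa := Real.sqrt_nonneg _
  have hsc0 : 0 ≤ sc := Real.sqrt_nonneg _
  have hrap : 0 < ra := Real.sqrt_pos.mpr hγa
  have hrcp : 0 < rc := Real.sqrt_pos.mpr hγc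
  have hsa2 : sa^2 = Ca := Real.sq_sqrt hCa.le
  have hsc2 : sc^2 = Cc := Real.sq_sqrt hCc.le
  have hra2 : ra^2 = γa := Real.sq_sqrt hγa.le
  have hrc2 : rc^2 = γc := Real.sq_sqrt hγc.le
  set A1 : ℝ := (sa/ra + 1)/γb with hA1def
  set A2 : ℝ := (sc/rc + 1)/γb with hA2def
  set E1 : ℝ := 1/ra + 1/rc + A1*sc + A2*sa with hE1def
  set E2 : ℝ := A1 + A2 with hE2def
  set C₀ : ℝ := E1*(2*E1+E2+1) + E2 with hC₀def
  have hC₀pos : 0 < C₀ := by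
    have hA1p : 0 < A1 := by rw [hA1def]; positivity
    have hA2p : 0 < A2 := by rw [hA2def]; positivity
    have hE1p : 0 < E1 := by rw [hE1def]; positivity
    have hE2p : 0 < E2 := by rw [hE2def]; positivity
    rw [hC₀def]; positivity
  -- norm bounds for Aop, Cop images via semidefinite Cauchy-Schwarz
  have hAopnorm : ∀ u : M, ‖Aop u‖ ≤ sa * Real.sqrt (a u u) := by
    intro u
    set α := Real.sqrt (a u u) with hαdef
    have hα2 : α^2 = a u u := Real.sq_sqrt (ha_psd u)
    have h1 : ‖Aop u‖^2 = a u (Aop u) := by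
      rw [← hAop]
      exact (real_inner_self_eq_norm_sq _).symm
    have h2 : a (Aop u) (Aop u) ≤ Ca * ‖Aop u‖^2 := by
      calc a (Aop u) (Aop u) ≤ Ca * ‖Aop u‖ * ‖Aop u‖ := ha_bound (Aop u) (Aop u)
        _ = Ca * ‖Aop u‖^2 := by ring
    have h3 : (‖Aop u‖^2)^2 ≤ (sa*α*‖Aop u‖)^2 := by
      calc (‖Aop u‖^2)^2 = (a u (Aop u))^2 := by rw [h1]
        _ ≤ a u u * a (Aop u) (Aop u) := cs_bilin a ha_symm ha_psd u (Aop u)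
        _ ≤ a u u * (Ca * ‖Aop u‖^2) := mul_le_mul_of_nonneg_left h2 (ha_psd u)
        _ = (sa*α*‖Aop u‖)^2 := by rw [← hα2, ← hsa2]; ring
    have h4 : ‖Aop u‖^2 ≤ sa*α*‖Aop u‖ := sqle (by positivity) h3
    rcases eq_or_lt_of_le (norm_nonneg (Aop u)) with h0 | h0
    · rw [← h0]; positivity
    · have h5 : ‖Aop u‖*‖Aop u‖ ≤ (sa*α)*‖Aop u‖ := by
        have hpow : ‖Aop u‖*‖Aop u‖ = ‖Aop u‖^2 := by ring
        linarith [h4]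
      exact le_of_mul_le_mul_right h5 h0
  have hCopnorm : ∀ p : N, ‖Cop p‖ ≤ sc * Real.sqrt (c p p) := by
    intro p
    set σ := Real.sqrt (c p p) with hσdef
    have hσ2 : σ^2 = c p p := Real.sq_sqrt (hc_psd p)
    have h1 : ‖Cop p‖^2 = c p (Cop p) := by
      rw [← hCop]
      exact (real_inner_self_eq_norm_sq _).symm
    have h2 : c (Cop p) (Cop p) ≤ Cc * ‖Cop p‖^2 := by
      calc c (Cop p) (Cop p) ≤ Cc * ‖Cop p‖ * ‖Cop p‖ := hc_bound (Cop p) (Cop p)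
        _ = Cc * ‖Cop p‖^2 := by ring
    have h3 : (‖Cop p‖^2)^2 ≤ (sc*σ*‖Cop p‖)^2 := by
      calc (‖Cop p‖^2)^2 = (c p (Cop p))^2 := by rw [h1]
        _ ≤ c p p * c (Cop p) (Cop p) := cs_bilin c hc_symm hc_psd p (Cop p)
        _ ≤ c p p * (Cc * ‖Cop p‖^2) := mul_le_mul_of_nonneg_left h2 (hc_psd p)
        _ = (sc*σ*‖Cop p‖)^2 := by rw [← hσ2, ← hsc2]; ring
    have h4 : ‖Cop p‖^2 ≤ sc*σ*‖Cop p‖ := sqle (by positivity) h3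
    rcases eq_or_lt_of_le (norm_nonneg (Cop p)) with h0 | h0
    · rw [← h0]; positivity
    · have h5 : ‖Cop p‖*‖Cop p‖ ≤ (sc*σ)*‖Cop p‖ := by
        have hpow : ‖Cop p‖*‖Cop p‖ = ‖Cop p‖^2 := by ring
        linarith [h4]
      exact le_of_mul_le_mul_right h5 h0
  -- THE KEY A PRIORI ESTIMATE
  have key : ∀ (u : M) (p : N),
      ‖u‖ + ‖p‖ ≤ C₀ * (‖Aop u + Bst p‖ + ‖Bop u - Cop p‖) := by
    intro u p
    set fv : M := Aop u + Bst p with hfvdef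
    set gv : N := Bop u - Cop p with hgvdef
    set F := ‖fv‖ with hFdef
    set G := ‖gv‖ with hGdef
    set α := Real.sqrt (a u u) with hαdef
    set σ := Real.sqrt (c p p) with hσdef
    have hα2 : α^2 = a u u := Real.sq_sqrt (ha_psd u)
    have hσ2 : σ^2 = c p p := Real.sq_sqrt (hc_psd p)
    have hα0 : 0 ≤ α := Real.sqrt_nonneg _
    have hσ0 : 0 ≤ σ := Real.sqrt_nonneg _
    -- decomposition of u
    set ubar : M := ((W.orthogonalProjectionOnto u : W) : M) with hubardef
    set u0 : M := u - ubar with hu0def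
    have hmem : ubar ∈ W := SetLike.coe_mem _
    have hu0orth : u0 ∈ Wᗮ := Submodule.sub_starProjection_mem_orthogonal (K := W) u
    have hu0K : ∀ q : N, b u0 q = 0 := by
      intro q
      have h1 : Bst (proj q) ∈ W := ⟨proj q, projmem q, rfl⟩
      calc b u0 q = ⟪Bst q, u0⟫ := (hBst q u0).symm
        _ = ⟪Bst (proj q), u0⟫ := by rw [← L1]
        _ = 0 := (Submodule.mem_orthogonal W u0).mp hu0orth _ h1
    have hBopu0 : Bop u0 = 0 := by
      have : ⟪Bop u0, Bop u0⟫ = 0 := by rw [hBop]; exact hu0K _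
      exact inner_self_eq_zero.mp this
    have hBub : Bop ubar = Bop u := by
      calc Bop ubar = Bop u0 + Bop ubar := by rw [hBopu0, zero_add]
        _ = Bop (u0 + ubar) := (map_add _ _ _).symm
        _ = Bop u := by rw [hu0def, sub_add_cancel]
    -- dual inf-sup bound for the component of u
    have n1bound : γb * ‖ubar‖ ≤ ‖Bop u‖ := by
      obtain ⟨r, hrK, hre0⟩ := hmem
      have hre : Bst r = ubar := hre0
      have h1 : ‖ubar‖^2 ≤ ‖Bop u‖ * ‖r‖ := by
        calc ‖ubar‖^2 = ⟪ubar, ubar⟫ := (real_inner_self_eq_norm_sq _).symm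
          _ = ⟪Bst r, ubar⟫ := by rw [hre]
          _ = b ubar r := hBst r ubar
          _ = ⟪Bop ubar, r⟫ := (hBop ubar r).symm
          _ = ⟪Bop u, r⟫ := by rw [hBub]
          _ ≤ ‖Bop u‖ * ‖r‖ := real_inner_le_norm _ _
      have h2 : γb * ‖r‖ ≤ ‖ubar‖ := by
        have h := L3 r hrK
        rwa [hre] at h
      rcases eq_or_lt_of_le (norm_nonneg ubar) with h0 | h0
      · rw [← h0, mul_zero]; exact norm_nonneg _
      · have h4 : ‖Bop u‖ * (γb*‖r‖) ≤ ‖Bop u‖ * ‖ubar‖ :=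
          mul_le_mul_of_nonneg_left h2 (norm_nonneg _)
        have h5 : γb*‖ubar‖*‖ubar‖ ≤ ‖Bop u‖*‖ubar‖ := by
          have k1 := mul_le_mul_of_nonneg_left h1 hγb.le
          have k2 : γb*‖ubar‖*‖ubar‖ = γb*‖ubar‖^2 := by ring
          have k3 : γb*(‖Bop u‖*‖r‖) = ‖Bop u‖*(γb*‖r‖) := by ring
          linarith [k1, h4]
        exact le_of_mul_le_mul_right h5 h0
    -- the four structural inequalities
    have e2' : γb * ‖proj p‖ ≤ F + sa*α := by
      have h1 : Bst p = fv - Aop u := by rw [hfvdef]; abel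
      calc γb * ‖proj p‖ ≤ ‖Bst p‖ := L2 p
        _ = ‖fv - Aop u‖ := by rw [h1]
        _ ≤ ‖fv‖ + ‖Aop u‖ := norm_sub_le _ _
        _ ≤ F + sa*α := by have := hAopnorm u; rw [← hαdef] at this; linarith
    have e3' : γb * ‖ubar‖ ≤ G + sc*σ := by
      have h1 : Bop u = gv + Cop p := by rw [hgvdef]; abel
      calc γb * ‖ubar‖ ≤ ‖Bop u‖ := n1bound
        _ = ‖gv + Cop p‖ := by rw [h1]
        _ ≤ ‖gv‖ + ‖Cop p‖ := norm_add_le _ _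
        _ ≤ G + sc*σ := by have := hCopnorm p; rw [← hσdef] at this; linarith
    have e4' : ra * ‖u0‖ ≤ α + sa*‖ubar‖ := by
      have h1 : γa * ‖u0‖^2 ≤ a u0 u0 := ha_coercive u0 hu0K
      have hexp : a u0 u0 = a u u - 2*(a u ubar) + a ubar ubar := by
        rw [hu0def]
        simp only [map_sub, LinearMap.sub_apply]
        rw [ha_symm ubar u]
        ring
      have hbb : a ubar ubar ≤ sa^2*‖ubar‖^2 := by
        calc a ubar ubar ≤ Ca * ‖ubar‖ * ‖ubar‖ := ha_bound ubar ubar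
          _ = sa^2*‖ubar‖^2 := by rw [hsa2]; ring
      have hcs : (a u ubar)^2 ≤ (α*(sa*‖ubar‖))^2 := by
        calc (a u ubar)^2 ≤ a u u * a ubar ubar := cs_bilin a ha_symm ha_psd u ubar
          _ ≤ a u u * (sa^2*‖ubar‖^2) := by
              apply mul_le_mul_of_nonneg_left hbb (ha_psd u)
          _ = (α*(sa*‖ubar‖))^2 := by rw [← hα2]; ring
      have habs : -(α*(sa*‖ubar‖)) ≤ a u ubar := by
        have hneg : (-(a u ubar))^2 ≤ (α*(sa*‖ubar‖))^2 := by
          calc (-(a u ubar))^2 = (a u ubar)^2 := by ring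
            _ ≤ _ := hcs
        have := sqle (x := -(a u ubar)) (by positivity) hneg
        linarith
      have h2 : (ra*‖u0‖)^2 ≤ (α + sa*‖ubar‖)^2 := by
        have hq : γa*‖u0‖^2 ≤ (α + sa*‖ubar‖)^2 := by
          have hrhs : (α + sa*‖ubar‖)^2 = α^2 + 2*(α*(sa*‖ubar‖)) + sa^2*‖ubar‖^2 := by ring
          linarith [h1, hexp, hbb, habs, hα2]
        calc (ra*‖u0‖)^2 = γa*‖u0‖^2 := by rw [← hra2]; ring
          _ ≤ _ := hq
      exact sqle (by positivity) h2
    have e5' : rc * ‖p - proj p‖ ≤ σ + sc*‖proj p‖ := by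
      have hpk : ∀ φ : M, b φ (p - proj p) = 0 := hproj_ker p
      have h1 : γc * ‖p - proj p‖^2 ≤ c (p - proj p) (p - proj p) := hc_coercive _ hpk
      have hexp : c (p - proj p) (p - proj p) = c p p - 2*(c p (proj p)) + c (proj p) (proj p) := by
        simp only [map_sub, LinearMap.sub_apply]
        rw [hc_symm (proj p) p]
        ring
      have hbb : c (proj p) (proj p) ≤ sc^2*‖proj p‖^2 := by
        calc c (proj p) (proj p) ≤ Cc * ‖proj p‖ * ‖proj p‖ := hc_bound (proj p) (proj p)
          _ = sc^2*‖proj p‖^2 := by rw [hsc2]; ring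
      have hcs : (c p (proj p))^2 ≤ (σ*(sc*‖proj p‖))^2 := by
        calc (c p (proj p))^2 ≤ c p p * c (proj p) (proj p) := cs_bilin c hc_symm hc_psd p (proj p)
          _ ≤ c p p * (sc^2*‖proj p‖^2) := by
              apply mul_le_mul_of_nonneg_left hbb (hc_psd p)
          _ = (σ*(sc*‖proj p‖))^2 := by rw [← hσ2]; ring
      have habs : -(σ*(sc*‖proj p‖)) ≤ c p (proj p) := by
        have hneg : (-(c p (proj p)))^2 ≤ (σ*(sc*‖proj p‖))^2 := by
          calc (-(c p (proj p)))^2 = (c p (proj p))^2 := by ring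
            _ ≤ _ := hcs
        have := sqle (x := -(c p (proj p))) (by positivity) hneg
        linarith
      have h2 : (rc*‖p - proj p‖)^2 ≤ (σ + sc*‖proj p‖)^2 := by
        have hq : γc*‖p - proj p‖^2 ≤ (σ + sc*‖proj p‖)^2 := by
          have hrhs : (σ + sc*‖proj p‖)^2 = σ^2 + 2*(σ*(sc*‖proj p‖)) + sc^2*‖proj p‖^2 := by ring
          linarith [h1, hexp, hbb, habs, hσ2]
        calc (rc*‖p - proj p‖)^2 = γc*‖p - proj p‖^2 := by rw [← hrc2]; ring
          _ ≤ _ := hq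
      exact sqle (by positivity) h2
    -- energy identity
    have e1' : α^2 + σ^2 ≤ F*‖u‖ + G*‖p‖ := by
      have h1 : a u u + c p p = ⟪fv, u⟫ - ⟪gv, p⟫ := by
        rw [hfvdef, hgvdef, inner_add_left, inner_sub_left, hAop, hBst, hBop, hCop]
        ring
      have h2 : ⟪fv, u⟫ ≤ F*‖u‖ := real_inner_le_norm _ _
      have h3 : |⟪gv, p⟫| ≤ G*‖p‖ := abs_real_inner_le_norm _ _
      have h4 := neg_abs_le ⟪gv, p⟫
      rw [hα2, hσ2]
      linarith
    have e6' : ‖u‖ ≤ ‖u0‖ + ‖ubar‖ := by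
      calc ‖u‖ = ‖u0 + ubar‖ := by rw [hu0def, sub_add_cancel]
        _ ≤ ‖u0‖ + ‖ubar‖ := norm_add_le _ _
    have e7' : ‖p‖ ≤ ‖p - proj p‖ + ‖proj p‖ := by
      calc ‖p‖ = ‖(p - proj p) + proj p‖ := by rw [sub_add_cancel]
        _ ≤ ‖p - proj p‖ + ‖proj p‖ := norm_add_le _ _
    have := brezzi_scalar sa sc ra rc γb α σ F G (‖u‖) (‖p‖) (‖u0‖) (‖ubar‖)
      (‖p - proj p‖) (‖proj p‖) A1 A2 E1 E2
      hsa0 hsc0 hrap hrcp hγb hα0 hσ0 (norm_nonneg _) (norm_nonneg _)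
      (norm_nonneg _) (norm_nonneg _) (norm_nonneg _) (norm_nonneg _)
      hA1def hA2def hE1def hE2def
      e1' e2' e3' e4' e5' e6' e7'
    rw [hC₀def]
    exact this
  -- solutions correspond to vector equations
  have hsol : ∀ (u : M) (p : N) (fv : M) (gv : N),
      (∀ φ, a u φ + b φ p = ⟪fv, φ⟫) → (∀ q, b u q - c p q = ⟪gv, q⟫) →
      Aop u + Bst p = fv ∧ Bop u - Cop p = gv := by
    intro u p fv gv h1 h2
    constructor
    · have h3 : ∀ φ : M, ⟪Aop u + Bst p - fv, φ⟫ = 0 := by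
        intro φ
        rw [inner_sub_left, inner_add_left, hAop, hBst, h1 φ, sub_self]
      exact sub_eq_zero.mp (inner_self_eq_zero.mp (h3 (Aop u + Bst p - fv)))
    · have h3 : ∀ q : N, ⟪Bop u - Cop p - gv, q⟫ = 0 := by
        intro q
        rw [inner_sub_left, inner_sub_left, hBop, hCop, h2 q, sub_self]
      exact sub_eq_zero.mp (inner_self_eq_zero.mp (h3 (Bop u - Cop p - gv)))
  -- the operator on the product space
  set E := WithLp.prodContinuousLinearEquiv 2 ℝ M N with hEdef
  set P : M × N →L[ℝ] M × N :=
    ((Aop.comp (ContinuousLinearMap.fst ℝ M N)) + Bst.comp (ContinuousLinearMap.snd ℝ M N)).prod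
    ((Bop.comp (ContinuousLinearMap.fst ℝ M N)) - Cop.comp (ContinuousLinearMap.snd ℝ M N))
    with hPdef
  set T : WithLp 2 (M × N) →L[ℝ] WithLp 2 (M × N) :=
    (E.symm.toContinuousLinearMap).comp (P.comp E.toContinuousLinearMap) with hTdef
  have hT1 : ∀ x : WithLp 2 (M × N), (T x).fst = Aop x.fst + Bst x.snd := fun x => rfl
  have hT2 : ∀ x : WithLp 2 (M × N), (T x).snd = Bop x.fst - Cop x.snd := fun x => rfl
  have hnormsplit : ∀ x : WithLp 2 (M × N), ‖x‖ ≤ ‖x.fst‖ + ‖x.snd‖ := by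
    intro x
    have h1 : ‖x‖^2 = ‖x.fst‖^2 + ‖x.snd‖^2 := WithLp.prod_norm_sq_eq_of_L2 x
    apply sqle (by positivity)
    have h2 : (‖x.fst‖+‖x.snd‖)^2 = ‖x.fst‖^2 + 2*(‖x.fst‖*‖x.snd‖) + ‖x.snd‖^2 := by ring
    have h3 := mul_nonneg (norm_nonneg x.fst) (norm_nonneg x.snd)
    linarith
  have hcomple : ∀ x : WithLp 2 (M × N), ‖x.fst‖ ≤ ‖x‖ ∧ ‖x.snd‖ ≤ ‖x‖ := by
    intro x
    have h1 : ‖x‖^2 = ‖x.fst‖^2 + ‖x.snd‖^2 := WithLp.prod_norm_sq_eq_of_L2 x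
    constructor
    · apply sqle (norm_nonneg x)
      have := sq_nonneg ‖x.snd‖
      linarith
    · apply sqle (norm_nonneg x)
      have := sq_nonneg ‖x.fst‖
      linarith
  have hTlow : ∀ x : WithLp 2 (M × N), ‖x‖ ≤ (2*C₀) * ‖T x‖ := by
    intro x
    have h1 := key x.fst x.snd
    have h2 : ‖(T x).fst‖ ≤ ‖T x‖ := (hcomple (T x)).1
    have h3 : ‖(T x).snd‖ ≤ ‖T x‖ := (hcomple (T x)).2
    have h4 : ‖x‖ ≤ ‖x.fst‖ + ‖x.snd‖ := hnormsplit x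
    rw [← hT1 x, ← hT2 x] at h1
    have h5 : C₀*(‖(T x).fst‖ + ‖(T x).snd‖) ≤ C₀*(2*‖T x‖) := by
      apply mul_le_mul_of_nonneg_left _ hC₀pos.le
      linarith
    calc ‖x‖ ≤ ‖x.fst‖+‖x.snd‖ := h4
      _ ≤ C₀*(‖(T x).fst‖+‖(T x).snd‖) := h1
      _ ≤ C₀*(2*‖T x‖) := h5
      _ = (2*C₀)*‖T x‖ := by ring
  have hTanti : AntilipschitzWith ⟨2*C₀, by positivity⟩ T :=
    T.antilipschitz_of_bound (fun x => hTlow x)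
  have hTsymm : ∀ x y : WithLp 2 (M × N), ⟪T x, y⟫ = ⟪x, T y⟫ := by
    intro x y
    have lhs : ⟪T x, y⟫ = a x.fst y.fst + b y.fst x.snd + (b x.fst y.snd - c x.snd y.snd) := by
      show ⟪Aop x.fst + Bst x.snd, y.fst⟫ + ⟪Bop x.fst - Cop x.snd, y.snd⟫ = _
      rw [inner_add_left, inner_sub_left, hAop, hBst, hBop, hCop]
    have rhs : ⟪x, T y⟫ = a y.fst x.fst + b x.fst y.snd + (b y.fst x.snd - c y.snd x.snd) := by
      show ⟪x.fst, Aop y.fst + Bst y.snd⟫ + ⟪x.snd, Bop y.fst - Cop y.snd⟫ = _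
      rw [inner_add_right, inner_sub_right, real_inner_comm (Aop y.fst) x.fst,
        real_inner_comm (Bst y.snd) x.fst, real_inner_comm (Bop y.fst) x.snd,
        real_inner_comm (Cop y.snd) x.snd, hAop, hBst, hBop, hCop]
    rw [lhs, rhs, ha_symm x.fst y.fst, hc_symm x.snd y.snd]
    ring
  -- surjectivity
  set Rng : Submodule ℝ (WithLp 2 (M × N)) := LinearMap.range (T : WithLp 2 (M × N) →ₗ[ℝ] WithLp 2 (M × N)) with hRdef
  have hRco : (Rng : Set (WithLp 2 (M × N))) = Set.range T := by
    ext z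
    simp only [hRdef, SetLike.mem_coe, LinearMap.mem_range, Set.mem_range, ContinuousLinearMap.coe_coe]
  have hRclosed : IsClosed (Rng : Set (WithLp 2 (M × N))) := by
    rw [hRco]
    exact hTanti.isClosed_range T.uniformContinuous
  haveI : CompleteSpace Rng := hRclosed.completeSpace_coe
  have hbot : Rngᗮ = ⊥ := by
    rw [Submodule.eq_bot_iff]
    intro y hy
    have h1 : ∀ x, ⟪T x, y⟫ = 0 := fun x => (Submodule.mem_orthogonal Rng y).mp hy _ ⟨x, rfl⟩
    have h4 : ∀ x, ⟪x, T y⟫ = 0 := fun x => by rw [← hTsymm]; exact h1 x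
    have h2 : T y = 0 := inner_self_eq_zero.mp (h4 (T y))
    have h5 := hTlow y
    rw [h2, norm_zero, mul_zero] at h5
    exact norm_le_zero_iff.mp h5
  have hRtop : Rng = ⊤ := Submodule.orthogonal_eq_bot_iff.mp hbot
  -- conclusion
  refine ⟨C₀, hC₀pos, fun f g => ?_⟩
  set fv : M := (InnerProductSpace.toDual ℝ M).symm f with hfvdef
  set gv : N := (InnerProductSpace.toDual ℝ N).symm g with hgvdef
  have hfv : ∀ φ, ⟪fv, φ⟫ = f φ := fun φ => InnerProductSpace.toDual_symm_apply
  have hgv : ∀ q, ⟪gv, q⟫ = g q := fun q => InnerProductSpace.toDual_symm_apply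
  have hfvn : ‖fv‖ = ‖f‖ := LinearIsometryEquiv.norm_map _ f
  have hgvn : ‖gv‖ = ‖g‖ := LinearIsometryEquiv.norm_map _ g
  have stab : ∀ (u : M) (p : N),
      ((∀ φ, a u φ + b φ p = f φ) ∧ (∀ q, b u q - c p q = g q)) →
      ‖u‖ + ‖p‖ ≤ C₀ * (‖f‖ + ‖g‖) := by
    rintro u p ⟨h1, h2⟩
    obtain ⟨hv1, hv2⟩ := hsol u p fv gv (fun φ => by rw [hfv]; exact h1 φ)
      (fun q => by rw [hgv]; exact h2 q)
    have hk := key u p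
    rw [hv1, hv2, hfvn, hgvn] at hk
    exact hk
  refine ⟨?_, ?_, stab⟩
  · -- existence
    set y0 : WithLp 2 (M × N) := E.symm (fv, gv) with hy0def
    have hy0 : y0 ∈ Rng := hRtop ▸ Submodule.mem_top
    obtain ⟨x, hx⟩ := hy0
    refine ⟨x.fst, x.snd, ?_, ?_⟩
    · intro φ
      have h1 : Aop x.fst + Bst x.snd = fv :=
        congrArg (fun z : WithLp 2 (M × N) => z.fst) hx
      rw [← hfv φ, ← h1, inner_add_left, hAop, hBst]
    · intro q
      have h2 : Bop x.fst - Cop x.snd = gv :=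
        congrArg (fun z : WithLp 2 (M × N) => z.snd) hx
      rw [← hgv q, ← h2, inner_sub_left, hBop, hCop]
  · -- uniqueness
    rintro u p u' p' ⟨h1, h2⟩ ⟨h1', h2'⟩
    have hd1 : ∀ φ, a (u-u') φ + b φ (p-p') = ⟪(0 : M), φ⟫ := by
      intro φ
      rw [inner_zero_left]
      simp only [map_sub, LinearMap.sub_apply]
      linarith [h1 φ, h1' φ]
    have hd2 : ∀ q, b (u-u') q - c (p-p') q = ⟪(0 : N), q⟫ := by
      intro q
      rw [inner_zero_left]
      simp only [map_sub, LinearMap.sub_apply]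
      linarith [h2 q, h2' q]
    obtain ⟨hv1, hv2⟩ := hsol (u-u') (p-p') 0 0 hd1 hd2
    have hk := key (u-u') (p-p')
    simp only [hv1, hv2, norm_zero, add_zero, mul_zero] at hk
    have hu : ‖u-u'‖ = 0 := le_antisymm (by linarith [norm_nonneg (p-p')]) (norm_nonneg _)
    have hp : ‖p-p'‖ = 0 := le_antisymm (by linarith [norm_nonneg (u-u')]) (norm_nonneg _)
    exact ⟨sub_eq_zero.mp (norm_eq_zero.mp hu), sub_eq_zero.mp (norm_eq_zero.mp hp)⟩
end
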